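/- arXiv:1202.3101 — 3 statements merged into one kernel-verified Lean document; each statement's English description precedes it below -/
import Mathlib

section
/- Let b = Γ↷^b(X,μ) be a measure preserving action of a countable group Γ, let α_0,…,α_{n−1} be nonnegative reals summing to 1, and let d = ι_{η_α}×b = Σ_{i<n} α_i b. Then for every compact Polish space K, E(d,K) ⊆ co E(b,K) ⊆ E(ι×b, K), where co denotes convex hull in M_s(K^Γ). -/
open scoped NNReal ENNReal

/-- A measure preserving action of a group `Γ` on a standard probability space. -/
structure MPAction (Γ : Type) [Group Γ] where
  X : Type
  [mX : MeasurableSpace X]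
  [sb : StandardBorelSpace X]
  μ : MeasureTheory.Measure X
  [prob : MeasureTheory.IsProbabilityMeasure μ]
  act : Γ → X → X
  one_act : ∀ x, act 1 x = x
  mul_act : ∀ γ δ x, act (γ * δ) x = act γ (act δ x)
  pres : ∀ γ : Γ, MeasureTheory.MeasurePreserving (act γ) μ μ

attribute [instance] MPAction.mX MPAction.sb MPAction.prob

open MeasureTheory Topology Filter

variable {Γ : Type} [Group Γ]

/-- A finite Borel partition of a space. -/
def IsPartition {X : Type} [MeasurableSpace X] {k : ℕ} (A : Fin k → Set X) : Prop :=
  (∀ i, MeasurableSet (A i)) ∧ (∀ i j, i ≠ j → Disjoint (A i) (A j)) ∧ (⋃ i, A i) = Set.univ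

/-- Weak containment of a measure preserving action in an action on a (possibly
nonstandard) measure space, expressed at the level of the underlying data. -/
def WCgen {X Y : Type} [MeasurableSpace X] [MeasurableSpace Y]
    (actA : Γ → X → X) (μ : Measure X) (actB : Γ → Y → Y) (ν : Measure Y) : Prop :=
  ∀ (k : ℕ) (A : Fin k → Set X), IsPartition A →
    ∀ (F : Finset Γ) (ε : ℝ), 0 < ε →
      ∃ B : Fin k → Set Y, IsPartition B ∧
        ∀ γ ∈ F, ∀ i j : Fin k,
          |(μ (actA γ '' A i ∩ A j)).toReal - (ν (actB γ '' B i ∩ B j)).toReal| < ε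

/-- Weak containment `a ≺ b` of measure preserving actions. -/
def MPAction.WC (a b : MPAction Γ) : Prop := WCgen a.act a.μ b.act b.μ

/-- Weak equivalence `a ∼ b` of measure preserving actions. -/
def MPAction.WE (a b : MPAction Γ) : Prop := a.WC b ∧ b.WC a

/-- The diagonal product of two measure preserving actions. -/
noncomputable def MPAction.prod (a b : MPAction Γ) : MPAction Γ where
  X := a.X × b.X
  μ := a.μ.prod b.μ
  act γ p := (a.act γ p.1, b.act γ p.2)
  one_act p := by cases p with | mk x y => simp [a.one_act, b.one_act]
  mul_act γ δ p := by cases p with | mk x y => simp [a.mul_act, b.mul_act]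
  pres γ := (a.pres γ).prod (b.pres γ)

/-- The trivial (identity) action of `Γ` on a standard probability space `(Z, η)`. -/
def trivialAction (Γ : Type) [Group Γ] (Z : Type) [MeasurableSpace Z] [StandardBorelSpace Z]
    (η : Measure Z) [IsProbabilityMeasure η] : MPAction Γ where
  X := Z
  μ := η
  act _ z := z
  one_act _ := rfl
  mul_act _ _ _ := rfl
  pres _ := MeasurePreserving.id η

/-- Ergodicity: every invariant Borel set is null or conull. -/
def MPAction.IsErgodic (a : MPAction Γ) : Prop :=
  ∀ A : Set a.X, MeasurableSet A → (∀ γ : Γ, a.act γ ⁻¹' A = A) → a.μ A = 0 ∨ a.μ A = 1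

/-- Freeness: for every nonidentity group element, the set of fixed points is null. -/
def MPAction.IsFree (a : MPAction Γ) : Prop :=
  ∀ γ : Γ, γ ≠ 1 → a.μ {x | a.act γ x = x} = 0

/-- Strong ergodicity: every asymptotically invariant sequence of Borel sets is trivial. -/
def MPAction.IsStronglyErgodic (b : MPAction Γ) : Prop :=
  ∀ B : ℕ → Set b.X, (∀ n, MeasurableSet (B n)) →
    (∀ γ : Γ, Tendsto (fun n => (b.μ (symmDiff (b.act γ '' B n) (B n))).toReal) atTop (nhds 0)) →
    Tendsto (fun n => (b.μ (B n)).toReal * (1 - (b.μ (B n)).toReal)) atTop (nhds 0)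

/-- Stable weak containment: `a ≺ ι × b` where `ι` is the trivial action on a standard
non-atomic probability space. -/
def MPAction.SWC (a b : MPAction Γ) : Prop :=
  ∀ (Z : Type) [MeasurableSpace Z] [StandardBorelSpace Z] (η : Measure Z)
    [IsProbabilityMeasure η] [NullSingletonClass η],
    a.WC ((trivialAction Γ Z η).prod b)

/-- Stable weak equivalence. -/
def MPAction.SWE (a b : MPAction Γ) : Prop := a.SWC b ∧ b.SWC a

/-- Amenability: existence of a left-invariant finitely additive probability measure on
all subsets of the group. -/
def IsAmenable (Γ : Type) [Group Γ] : Prop :=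
  ∃ m : Set Γ → ℝ, (∀ A, 0 ≤ m A) ∧ m Set.univ = 1 ∧
    (∀ A B : Set Γ, Disjoint A B → m (A ∪ B) = m A + m B) ∧
    (∀ (γ : Γ) (A : Set Γ), m ((γ * ·) '' A) = m A)
open MeasureTheory Topology Filter

/-- The shift action of `Γ` on `K ^ Γ`. -/
def shiftMap (Γ : Type) [Group Γ] (K : Type) (γ : Γ) : (Γ → K) → (Γ → K) :=
  fun f δ => f (γ⁻¹ * δ)

/-- The itinerary map `Φ^{φ,a} : X → K^Γ` associated to an observable `φ : X → K`. -/
def itinMap {Γ : Type} [Group Γ] (a : MPAction Γ) (K : Type) (φ : a.X → K) : a.X → (Γ → K) :=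
  fun x γ => φ (a.act γ⁻¹ x)

/-- `E(a, K)`: the set of shift-invariant measures on `K^Γ` arising as pushforwards of the
measure of `a` under itinerary maps; equivalently, the shift-invariant factors of `a`. -/
def actE {Γ : Type} [Group Γ] (a : MPAction Γ) (K : Type) [MeasurableSpace K] :
    Set (ProbabilityMeasure (Γ → K)) :=
  {ν | ∃ φ : a.X → K, Measurable φ ∧
    (ν : Measure (Γ → K)) = Measure.map (itinMap a K φ) a.μ}

/-- The convex hull (set of finite convex combinations) of a set of probability measures. -/
def convexCombos {Ω : Type} [MeasurableSpace Ω] (E : Set (ProbabilityMeasure Ω)) :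
    Set (ProbabilityMeasure Ω) :=
  {ν | ∃ (n : ℕ) (w : Fin n → NNReal) (μs : Fin n → ProbabilityMeasure Ω),
      (∑ i, w i) = 1 ∧ (∀ i, μs i ∈ E) ∧
      (ν : Measure Ω) = ∑ i, (w i : ENNReal) • (μs i : Measure Ω)}

/-- Weak containment for sets of measure preserving actions. -/
def SetWC {Γ : Type} [Group Γ] (𝒜 ℬ : Set (MPAction Γ)) : Prop :=
  ∀ a ∈ 𝒜, ∀ (k : ℕ) (P : Fin k → Set a.X), IsPartition P →
    ∀ (F : Finset Γ) (ε : ℝ), 0 < ε →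
      ∃ b ∈ ℬ, ∃ Q : Fin k → Set b.X, IsPartition Q ∧
        ∀ γ ∈ F, ∀ i j : Fin k,
          |(a.μ (a.act γ '' P i ∩ P j)).toReal - (b.μ (b.act γ '' Q i ∩ Q j)).toReal| < ε

/-- Weak equivalence for sets of measure preserving actions. -/
def SetWE {Γ : Type} [Group Γ] (𝒜 ℬ : Set (MPAction Γ)) : Prop := SetWC 𝒜 ℬ ∧ SetWC ℬ 𝒜

open MeasureTheory Topology Filter

/-- The discrete probability measure on `Fin n` with weights `α`. -/
noncomputable def discreteMeasure {n : ℕ} (α : Fin n → NNReal) : Measure (Fin n) :=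
  ∑ i, (α i : ENNReal) • Measure.dirac i

lemma discreteMeasure_isProbability {n : ℕ} (α : Fin n → NNReal) (hα : ∑ i, α i = 1) :
    IsProbabilityMeasure (discreteMeasure α) := by
  constructor
  simp only [discreteMeasure, Measure.finset_sum_apply, Measure.smul_apply, smul_eq_mul,
    Measure.dirac_apply_of_mem (Set.mem_univ _), mul_one]
  rw [← ENNReal.coe_finset_sum, hα, ENNReal.coe_one]

/-- The convex combination `Σ_{i<n} α_i b = ι_{η_α} × b` of `n` copies of `b`. -/
noncomputable def convexSumAction {Γ : Type} [Group Γ] (b : MPAction Γ) {n : ℕ}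
    (α : Fin n → NNReal) (hα : ∑ i, α i = 1) : MPAction Γ :=
  haveI := discreteMeasure_isProbability α hα
  (trivialAction Γ (Fin n) (discreteMeasure α)).prod b

lemma uniformSum (n : ℕ) (hn : 0 < n) : (∑ _i : Fin n, ((n : NNReal))⁻¹) = 1 := by
  simp only [Finset.sum_const, Finset.card_univ, Fintype.card_fin, nsmul_eq_mul]
  rw [mul_inv_cancel₀]
  exact_mod_cast hn.ne'

/-- The set of actions `ι_{η_{α(n)}} × b` for uniform weights `α(n) = (1/n, …, 1/n)`. -/
noncomputable def uniformConvexSums {Γ : Type} [Group Γ] (b : MPAction Γ) : Set (MPAction Γ) :=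
  {d | ∃ (n : ℕ) (hn : 0 < n),
    d = convexSumAction b (fun _ : Fin n => ((n : NNReal))⁻¹) (uniformSum n hn)}

/-- The set of actions `ι_{η_α} × b` over all finite convex weights `α`. -/
noncomputable def allConvexSums {Γ : Type} [Group Γ] (b : MPAction Γ) : Set (MPAction Γ) :=
  {d | ∃ (n : ℕ) (_ : 1 ≤ n) (α : Fin n → NNReal) (hα : ∑ i, α i = 1),
    d = convexSumAction b α hα}

section Aux

open Set

lemma iic_directed_le {f : ℕ → ℝ} (hf : Monotone f) :
    Directed (· ⊆ ·) (fun n => Set.Iic (f n)) :=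
  Monotone.directed_le fun i j hij => Set.Iic_subset_Iic.mpr (hf hij)

lemma iic_directed_ge {f : ℕ → ℝ} (hf : Antitone f) :
    Directed (· ⊇ ·) (fun n => Set.Iic (f n)) :=
  Antitone.directed_ge fun i j hij => Set.Iic_subset_Iic.mpr (hf hij)

/-- For a finite atomless measure on ℝ, every value up to the total mass is attained by `Iic t`. -/
lemma exists_Iic_measure_eq (ν : Measure ℝ) [IsFiniteMeasure ν] [NullSingletonClass ν]
    {r : ℝ≥0∞} (h0 : 0 < r) (hr : r < ν Set.univ) : ∃ t : ℝ, ν (Set.Iic t) = r := by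
  set S : Set ℝ := {t | r ≤ ν (Set.Iic t)} with hS
  have hU : ν Set.univ = ⨆ n : ℕ, ν (Set.Iic (n : ℝ)) := by
    rw [← Directed.measure_iUnion (iic_directed_le (fun i j hij => by exact_mod_cast hij))]
    congr 1
    ext x
    simp only [Set.mem_iUnion, Set.mem_Iic, Set.mem_univ, true_iff]
    exact exists_nat_ge x
  have hne : S.Nonempty := by
    rw [hU] at hr
    obtain ⟨n, hn⟩ := lt_iSup_iff.mp hr
    exact ⟨n, hn.le⟩
  have hzero : (⨅ n : ℕ, ν (Set.Iic (-(n : ℝ)))) = 0 := by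
    rw [← Directed.measure_iInter (fun n => measurableSet_Iic.nullMeasurableSet)
      (iic_directed_ge (fun i j hij => neg_le_neg (by exact_mod_cast hij)))
      ⟨0, measure_ne_top _ _⟩]
    convert measure_empty (μ := ν)
    ext x
    simp only [Set.mem_iInter, Set.mem_Iic, Set.mem_empty_iff_false, iff_false, not_forall, not_le]
    obtain ⟨n, hn⟩ := exists_nat_gt (-x)
    exact ⟨n, by linarith⟩
  have hbb : ∃ m : ℕ, ν (Set.Iic (-(m : ℝ))) < r := by
    by_contra h
    push_neg at h
    have : r ≤ ⨅ n : ℕ, ν (Set.Iic (-(n : ℝ))) := le_iInf h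
    rw [hzero] at this
    exact h0.not_ge this
  obtain ⟨m, hm⟩ := hbb
  have hbdd : BddBelow S := by
    refine ⟨-(m : ℝ), fun t ht => ?_⟩
    by_contra h
    push_neg at h
    exact absurd (le_trans ht (measure_mono (Set.Iic_subset_Iic.mpr h.le))) hm.not_ge
  set t := sInf S with htdef
  refine ⟨t, le_antisymm ?_ ?_⟩
  · have hio : ν (Set.Iio t) ≤ r := by
      have heq : Set.Iio t = ⋃ n : ℕ, Set.Iic (t - 1/(n+1)) := by
        ext x
        simp only [Set.mem_Iio, Set.mem_iUnion, Set.mem_Iic]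
        constructor
        · intro hx
          obtain ⟨n, hn⟩ := exists_nat_one_div_lt (show (0:ℝ) < t - x by linarith)
          exact ⟨n, by push_cast at hn ⊢; linarith⟩
        · rintro ⟨n, hn⟩
          have : (0:ℝ) < 1/(n+1) := by positivity
          linarith
      have hmono : Monotone (fun n : ℕ => t - 1/((n:ℝ)+1)) := by
        intro i j hij
        simp only
        have : (1:ℝ)/((j:ℝ)+1) ≤ 1/((i:ℝ)+1) := by
          apply one_div_le_one_div_of_le (by positivity)
          have : (i:ℝ) ≤ j := by exact_mod_cast hij
          linarith
        linarith
      rw [heq, Directed.measure_iUnion (iic_directed_le hmono)]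
      refine iSup_le fun n => ?_
      have h1 : (0:ℝ) < 1/((n:ℝ)+1) := by positivity
      have hnot : t - 1/((n:ℝ)+1) ∉ S := fun hmem => by
        have := csInf_le hbdd hmem
        rw [← htdef] at this; linarith
      simp only [hS, Set.mem_setOf_eq, not_le] at hnot
      exact hnot.le
    calc ν (Set.Iic t) ≤ ν (Set.Iio t ∪ {t}) := measure_mono (by
          intro x hx
          rcases lt_or_eq_of_le (Set.mem_Iic.mp hx) with h | h
          · exact Or.inl h
          · exact Or.inr h)
      _ ≤ ν (Set.Iio t) + ν {t} := measure_union_le _ _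
      _ = ν (Set.Iio t) := by rw [measure_singleton, add_zero]
      _ ≤ r := hio
  · have heq : Set.Iic t = ⋂ n : ℕ, Set.Iic (t + 1/(n+1)) := by
      ext x
      simp only [Set.mem_Iic, Set.mem_iInter]
      constructor
      · intro hx n
        have : (0:ℝ) < 1/((n:ℝ)+1) := by positivity
        linarith
      · intro h
        by_contra hx
        push_neg at hx
        obtain ⟨n, hn⟩ := exists_nat_one_div_lt (show (0:ℝ) < x - t by linarith)
        have := h n
        push_cast at hn
        linarith
    have hanti : Antitone (fun n : ℕ => t + 1/((n:ℝ)+1)) := by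
      intro i j hij
      simp only
      have : (1:ℝ)/((j:ℝ)+1) ≤ 1/((i:ℝ)+1) := by
        apply one_div_le_one_div_of_le (by positivity)
        have : (i:ℝ) ≤ j := by exact_mod_cast hij
        linarith
      linarith
    rw [heq, Directed.measure_iInter (fun n => measurableSet_Iic.nullMeasurableSet)
      (iic_directed_ge hanti) ⟨0, measure_ne_top _ _⟩]
    refine le_iInf fun n => ?_
    have h1 : (0:ℝ) < 1/((n:ℝ)+1) := by positivity
    obtain ⟨t', ht'S, ht'lt⟩ : ∃ t' ∈ S, t' < t + 1/((n:ℝ)+1) :=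
      (csInf_lt_iff hbdd hne).mp (by rw [← htdef]; linarith)
    exact le_trans ht'S (measure_mono (Set.Iic_subset_Iic.mpr ht'lt.le))

/-- Sierpiński: an atomless finite measure on a standard Borel space attains every value
up to `η s` by a measurable subset of `s`. -/
lemma exists_subset_measure_eq' {Z : Type} [MeasurableSpace Z] [StandardBorelSpace Z]
    (η : Measure Z) [IsFiniteMeasure η] [NullSingletonClass η] {s : Set Z} (hs : MeasurableSet s)
    {r : ℝ≥0∞} (hr : r ≤ η s) : ∃ t, MeasurableSet t ∧ t ⊆ s ∧ η t = r := by
  rcases eq_or_lt_of_le hr with hr' | hr'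
  · exact ⟨s, hs, Set.Subset.rfl, hr'.symm⟩
  rcases eq_or_lt_of_le (zero_le : 0 ≤ r) with h0 | h0
  · exact ⟨∅, MeasurableSet.empty, Set.empty_subset _, by simp [← h0]⟩
  obtain ⟨f, hf⟩ := MeasureTheory.exists_measurableEmbedding_real Z
  set ν : Measure ℝ := Measure.map f (η.restrict s) with hν
  have hfin : IsFiniteMeasure ν := by
    constructor
    rw [hν, hf.map_apply]
    exact lt_of_le_of_lt (measure_mono (Set.subset_univ _)) (measure_lt_top _ _)
  have hna : NullSingletonClass ν := by
    constructor
    intro x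
    rw [hν, hf.map_apply]
    exact Set.Subsingleton.measure_zero (fun a ha b hb => hf.injective (ha.trans hb.symm)) _
  have huniv : ν Set.univ = η s := by
    rw [hν, hf.map_apply, Set.preimage_univ, Measure.restrict_apply MeasurableSet.univ,
      Set.univ_inter]
  obtain ⟨t0, ht0⟩ := exists_Iic_measure_eq ν h0 (by rw [huniv]; exact hr')
  refine ⟨f ⁻¹' (Set.Iic t0) ∩ s, (hf.measurable measurableSet_Iic).inter hs,
    Set.inter_subset_right, ?_⟩
  have : η (f ⁻¹' (Set.Iic t0) ∩ s) = (η.restrict s) (f ⁻¹' (Set.Iic t0)) := by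
    rw [Measure.restrict_apply (hf.measurable measurableSet_Iic)]
  rw [this, ← hf.map_apply, ← hν, ht0]

/-- Disjoint measurable subsets of prescribed measures inside a given set. -/
lemma exists_disjoint_family_measure_eq {Z : Type} [MeasurableSpace Z] [StandardBorelSpace Z]
    (η : Measure Z) [IsFiniteMeasure η] [NullSingletonClass η] :
    ∀ (m : ℕ) (w : Fin m → ℝ≥0∞) (s : Set Z), MeasurableSet s → (∑ i, w i) ≤ η s →
      ∃ B : Fin m → Set Z, (∀ i, MeasurableSet (B i)) ∧ (∀ i, B i ⊆ s) ∧
        (∀ i j, i ≠ j → Disjoint (B i) (B j)) ∧ ∀ i, η (B i) = w i := by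
  intro m
  induction m with
  | zero =>
    intro w s hs _
    exact ⟨fun i => i.elim0, fun i => i.elim0, fun i => i.elim0, fun i => i.elim0, fun i => i.elim0⟩
  | succ m ih =>
    intro w s hs hsum
    rw [Fin.sum_univ_succ] at hsum
    have hw0 : w 0 ≤ η s := le_trans (le_add_right le_rfl) hsum
    obtain ⟨B0, hB0m, hB0s, hB0⟩ := exists_subset_measure_eq' η hs hw0
    have hB0fin : η B0 ≠ ∞ := by rw [hB0]; exact ne_top_of_le_ne_top (measure_ne_top η s) hw0
    have hdiff : η (s \ B0) = η s - w 0 := by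
      rw [measure_diff hB0s hB0m.nullMeasurableSet hB0fin, hB0]
    have htail : (∑ i : Fin m, w i.succ) ≤ η (s \ B0) := by
      rw [hdiff]
      exact ENNReal.le_sub_of_add_le_left (ne_top_of_le_ne_top (measure_ne_top η s) hw0) hsum
    obtain ⟨B', hB'm, hB's, hB'd, hB'⟩ := ih (fun i => w i.succ) (s \ B0) (hs.diff hB0m) htail
    refine ⟨Fin.cases B0 B', ?_, ?_, ?_, ?_⟩
    · exact Fin.cases hB0m hB'm
    · exact Fin.cases hB0s (fun i => (hB's i).trans Set.diff_subset)
    · intro i j hij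
      induction i using Fin.cases with
      | zero =>
        induction j using Fin.cases with
        | zero => exact absurd rfl hij
        | succ j =>
          simp only [Fin.cases_zero, Fin.cases_succ]
          exact Disjoint.mono_right (hB's j) Set.disjoint_sdiff_right
      | succ i =>
        induction j using Fin.cases with
        | zero =>
          simp only [Fin.cases_zero, Fin.cases_succ]
          exact Disjoint.mono_left (hB's i) Set.disjoint_sdiff_right.symm
        | succ j =>
          simp only [Fin.cases_succ]
          exact hB'd i j (fun h => hij (by rw [h]))
    · exact Fin.cases hB0 hB'

variable {Γ : Type} [Group Γ]

/-- Itinerary maps are measurable. -/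
lemma measurable_itinMap (a : MPAction Γ) (K : Type) [MeasurableSpace K]
    {φ : a.X → K} (hφ : Measurable φ) : Measurable (itinMap a K φ) :=
  measurable_pi_lambda _ fun γ => hφ.comp (a.pres γ⁻¹).measurable

/-- Scalar multiplication commutes with products of measures (left factor). -/
lemma smul_prod_meas {A B : Type} [MeasurableSpace A] [MeasurableSpace B]
    (c : ℝ≥0∞) (μ : Measure A) [SFinite μ] (ν : Measure B) [SFinite ν] :
    (c • μ).prod ν = c • (μ.prod ν) := by
  ext s hs
  rw [Measure.smul_apply, Measure.prod_apply hs, Measure.prod_apply hs,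
    MeasureTheory.lintegral_smul_measure]

end Aux

/-- **Lemma (Tucker-Drob, Lemma 3.1).** Let `b` be a measure preserving action of a
countable group `Γ`, let `α₀, …, α_{n-1}` be nonnegative reals summing to `1`, and let
`d = ι_{η_α} × b = Σ_{i<n} α_i b`.  Then for every compact Polish space `K`,
`E(d, K) ⊆ co E(b, K) ⊆ E(ι × b, K)`, where `co` denotes the convex hull in `M_s(K^Γ)`. -/
theorem stmt9 (Γ : Type) [Group Γ] [Countable Γ] (b : MPAction Γ)
    (n : ℕ) (α : Fin n → NNReal) (hα : ∑ i, α i = 1)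
    (Z : Type) [MeasurableSpace Z] [StandardBorelSpace Z] (η : Measure Z)
    [IsProbabilityMeasure η] [NullSingletonClass η] :
    ∀ (K : Type) [TopologicalSpace K] [CompactSpace K] [PolishSpace K]
      [MeasurableSpace K] [BorelSpace K],
      actE (convexSumAction b α hα) K ⊆ convexCombos (actE b K) ∧
      convexCombos (actE b K) ⊆ actE ((trivialAction Γ Z η).prod b) K := by
  intro K _ _ _ _ _
  constructor
  · -- Part 1 : E(d,K) ⊆ co E(b,K)
    rintro ν ⟨φ, hφ, hmap⟩
    have hn : 0 < n := by
      rcases Nat.eq_zero_or_pos n with h | h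
      · subst h; simp at hα
      · exact h
    -- the sections of φ
    set φs : Fin n → b.X → K := fun i x => φ (i, x) with hφs
    have hφsm : ∀ i, Measurable (φs i) := fun i => hφ.comp measurable_prodMk_left
    set μs : Fin n → ProbabilityMeasure (Γ → K) := fun i =>
      ⟨Measure.map (itinMap b K (φs i)) b.μ,
        Measure.isProbabilityMeasure_map ((measurable_itinMap b K (hφsm i)).aemeasurable)⟩ with hμs
    refine ⟨n, α, μs, hα, fun i => ⟨φs i, hφsm i, rfl⟩, ?_⟩
    rw [hmap]
    have hd : (convexSumAction b α hα).μ = (discreteMeasure α).prod b.μ := rfl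
    have hcomp : ∀ i : Fin n,
        itinMap (convexSumAction b α hα) K φ ∘ Prod.mk i = itinMap b K (φs i) := by
      intro i; rfl
    have hmeas : Measurable (itinMap (convexSumAction b α hα) K φ) :=
      measurable_itinMap _ K hφ
    calc Measure.map (itinMap (convexSumAction b α hα) K φ) (convexSumAction b α hα).μ
        = Measure.map (itinMap (convexSumAction b α hα) K φ)
            ((Measure.sum fun i : Fin n => (α i : ℝ≥0∞) • Measure.dirac i).prod b.μ) := by
          rw [hd, discreteMeasure, ← Measure.sum_fintype]
          rfl
      _ = Measure.map (itinMap (convexSumAction b α hα) K φ)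
            (Measure.sum fun i : Fin n => ((α i : ℝ≥0∞) • Measure.dirac i).prod b.μ) := by
          rw [Measure.prod_sum_left]
          rfl
      _ = Measure.sum fun i : Fin n => Measure.map (itinMap (convexSumAction b α hα) K φ)
            (((α i : ℝ≥0∞) • Measure.dirac i).prod b.μ) := by
          exact Measure.map_sum hmeas.aemeasurable
      _ = ∑ i : Fin n, (α i : ℝ≥0∞) • (μs i : Measure (Γ → K)) := by
          rw [Measure.sum_fintype]
          refine Finset.sum_congr rfl fun i _ => ?_
          erw [smul_prod_meas, Measure.map_smul, Measure.dirac_prod,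
            Measure.map_map hmeas measurable_prodMk_left, hcomp i]
          rfl
  · -- Part 2 : co E(b,K) ⊆ E(ι×b, K)
    rintro ν ⟨m, w, μs, hw, hmem, hν⟩
    have hm : 0 < m := by
      rcases Nat.eq_zero_or_pos m with h | h
      · subst h; simp at hw
      · exact h
    choose φ hφm hφ using hmem
    -- a partition of Z with pieces of measure w i
    have hsum : (∑ i : Fin m, (w i : ℝ≥0∞)) ≤ η Set.univ := by
      rw [measure_univ, ← ENNReal.coe_finset_sum, hw, ENNReal.coe_one]
    obtain ⟨B, hBm, -, hBd, hB⟩ :=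
      exists_disjoint_family_measure_eq η m (fun i => (w i : ℝ≥0∞)) Set.univ
        MeasurableSet.univ hsum
    set i₀ : Fin m := ⟨0, hm⟩ with hi₀
    classical
    set idx : Z → Fin m := fun z => if h : ∃ i, z ∈ B i then h.choose else i₀ with hidxdef
    have hidx : ∀ (i : Fin m) (z : Z), z ∈ B i → idx z = i := by
      intro i z hz
      have hex : ∃ j, z ∈ B j := ⟨i, hz⟩
      have hch : z ∈ B hex.choose := hex.choose_spec
      rw [hidxdef]
      simp only [dif_pos hex]
      by_contra hne
      exact Set.disjoint_left.mp (hBd _ _ hne) hch hz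
    have hidxm : Measurable idx := by
      apply measurable_to_countable'
      intro i
      by_cases hii : i = i₀
      · have : idx ⁻¹' {i} = B i ∪ (⋃ j, B j)ᶜ := by
          ext z
          simp only [Set.mem_preimage, Set.mem_singleton_iff, Set.mem_union, Set.mem_compl_iff,
            Set.mem_iUnion]
          constructor
          · intro hz
            by_cases hex : ∃ j, z ∈ B j
            · obtain ⟨j, hj⟩ := hex
              left; rw [← hz, hidx j z hj]; exact hj
            · right; exact fun ⟨j, hj⟩ => hex ⟨j, hj⟩
          · rintro (hz | hz)
            · exact hidx i z hz
            · rw [hidxdef]; simp only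
              rw [dif_neg (fun ⟨j, hj⟩ => hz ⟨j, hj⟩)]
              exact hii.symm
        rw [this]
        exact (hBm i).union (MeasurableSet.iUnion hBm).compl
      · have : idx ⁻¹' {i} = B i := by
          ext z
          simp only [Set.mem_preimage, Set.mem_singleton_iff]
          constructor
          · intro hz
            by_cases hex : ∃ j, z ∈ B j
            · obtain ⟨j, hj⟩ := hex
              rw [← hz, hidx j z hj]; exact hj
            · exfalso
              apply hii
              rw [← hz, hidxdef]; simp only
              rw [dif_neg hex]
          · exact hidx i z
        rw [this]
        exact hBm i
    -- the glued observable
    set ψ : Z × b.X → K := fun p => φ (idx p.1) p.2 with hψdef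
    have hψm : Measurable ψ := by
      have h1 : Measurable fun q : b.X × Fin m => φ q.2 q.1 :=
        measurable_from_prod_countable_left fun i => hφm i
      exact h1.comp ((measurable_snd).prodMk (hidxm.comp measurable_fst))
    refine ⟨ψ, hψm, ?_⟩
    have hmeasψ : Measurable (itinMap ((trivialAction Γ Z η).prod b) K ψ) :=
      measurable_itinMap _ K hψm
    -- decompose η over the partition
    have hcover : ∀ᵐ z ∂η, z ∈ ⋃ i, B i := by
      have : η ((⋃ i, B i)ᶜ) = 0 := by
        have hU : η (⋃ i, B i) = 1 := by
          rw [measure_iUnion (fun i j hij => hBd i j hij) hBm]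
          rw [tsum_fintype]
          simp_rw [hB]
          rw [← ENNReal.coe_finset_sum, hw, ENNReal.coe_one]
        have := measure_compl (MeasurableSet.iUnion hBm) (measure_ne_top η _)
        rw [hU, measure_univ, tsub_self] at this
        exact this
      exact this
    have hηeq : η = Measure.sum fun i => η.restrict (B i) := by
      conv_lhs => rw [← Measure.restrict_eq_self_of_ae_mem hcover]
      exact Measure.restrict_iUnion (fun i j hij => hBd i j hij) hBm
    have hprod : ((trivialAction Γ Z η).prod b).μ = η.prod b.μ := rfl
    have key : ∀ i : Fin m,
        Measure.map (itinMap ((trivialAction Γ Z η).prod b) K ψ) ((η.restrict (B i)).prod b.μ)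
          = (w i : ℝ≥0∞) • (μs i : Measure (Γ → K)) := by
      intro i
      have hae : itinMap ((trivialAction Γ Z η).prod b) K ψ
          =ᵐ[(η.restrict (B i)).prod b.μ] (itinMap b K (φ i)) ∘ Prod.snd := by
        rw [Measure.restrict_prod_eq_prod_univ]
        filter_upwards [ae_restrict_mem ((hBm i).prod MeasurableSet.univ)] with p hp
        obtain ⟨hp1, -⟩ := hp
        funext γ
        show ψ (p.1, b.act γ⁻¹ p.2) = φ i (b.act γ⁻¹ p.2)
        rw [hψdef]
        simp only
        rw [hidx i p.1 hp1]
      calc Measure.map (itinMap ((trivialAction Γ Z η).prod b) K ψ)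
              ((η.restrict (B i)).prod b.μ)
          = Measure.map ((itinMap b K (φ i)) ∘ Prod.snd) ((η.restrict (B i)).prod b.μ) :=
            Measure.map_congr hae
        _ = Measure.map (itinMap b K (φ i))
              (Measure.map Prod.snd ((η.restrict (B i)).prod b.μ)) :=
            (Measure.map_map (measurable_itinMap b K (hφm i)) measurable_snd).symm
        _ = Measure.map (itinMap b K (φ i)) ((η.restrict (B i) Set.univ) • b.μ) := by
            rw [Measure.map_snd_prod]
        _ = (w i : ℝ≥0∞) • (μs i : Measure (Γ → K)) := by
            rw [Measure.restrict_apply MeasurableSet.univ, Set.univ_inter, hB i,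
              Measure.map_smul, hφ i]
    calc (ν : Measure (Γ → K))
        = ∑ i : Fin m, (w i : ℝ≥0∞) • (μs i : Measure (Γ → K)) := hν
      _ = Measure.sum fun i : Fin m => (w i : ℝ≥0∞) • (μs i : Measure (Γ → K)) :=
          (Measure.sum_fintype _).symm
      _ = Measure.sum fun i : Fin m =>
            Measure.map (itinMap ((trivialAction Γ Z η).prod b) K ψ)
              ((η.restrict (B i)).prod b.μ) := by
          congr 1; funext i; rw [key i]
      _ = Measure.map (itinMap ((trivialAction Γ Z η).prod b) K ψ)
            (Measure.sum fun i : Fin m => (η.restrict (B i)).prod b.μ) := by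
          exact (Measure.map_sum hmeasψ.aemeasurable).symm
      _ = Measure.map (itinMap ((trivialAction Γ Z η).prod b) K ψ)
            ((trivialAction Γ Z η).prod b).μ := by
          erw [hprod, ← Measure.prod_sum_left, ← hηeq]
          rfl
end

section
/- Let d = Γ↷^d(Y,ν) be a measure preserving action of a countable group Γ, and suppose π:(Y,ν)→(Z,η) is a factor map from d onto an identity action Γ↷^{ι_η}(Z,η). Let ν = ∫_z ν_z dη be the disintegration of ν with respect to π, and let d_z = Γ↷^d(Y,ν_z). If a = Γ↷^a(X,μ) is an ergodic factor of d via a map φ:(Y,ν)→(X,μ), then for η-almost every z ∈ Z, a is a factor of d_z via the same map φ. -/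
open scoped NNReal ENNReal

open MeasureTheory Topology Filter

variable {Γ : Type} [Group Γ]

open MeasureTheory Topology Filter

/-- `a` is a factor of `d` via the map `φ`: `φ` is measurable, measure preserving and
almost everywhere equivariant. -/
def IsFactorVia {Γ : Type} [Group Γ] (d a : MPAction Γ) (φ : d.X → a.X) : Prop :=
  Measurable φ ∧ Measure.map φ d.μ = a.μ ∧
    ∀ γ : Γ, ∀ᵐ y ∂d.μ, φ (d.act γ y) = a.act γ (φ y)

/-- `νz` is the disintegration of the measure of `d` over `(Z, η)` with respect to the
map `π`: an (essentially unique) measurable family of Borel probability measures `νz z`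
with `νz z (π⁻¹{z}) = 1` a.e. and `d.μ = ∫ νz z dη`. -/
def IsDisintegration {Γ : Type} [Group Γ] (d : MPAction Γ) {Z : Type} [MeasurableSpace Z]
    (η : Measure Z) (π : d.X → Z) (νz : Z → Measure d.X) : Prop :=
  (∀ z, IsProbabilityMeasure (νz z)) ∧
  (∀ B : Set d.X, MeasurableSet B → Measurable fun z => νz z B) ∧
  (∀ᵐ z ∂η, νz z (π ⁻¹' {z}) = 1) ∧
  (∀ B : Set d.X, MeasurableSet B → d.μ B = ∫⁻ z, νz z B ∂η)

section AuxTD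

variable {Γ : Type} [Group Γ]

private lemma MPAction.preimage_act_act (a : MPAction Γ) (γ δ : Γ) (s : Set a.X) :
    a.act δ ⁻¹' (a.act γ ⁻¹' s) = a.act (γ * δ) ⁻¹' s := by
  ext x; simp [a.mul_act]

private lemma MPAction.preimage_act_one (a : MPAction Γ) (s : Set a.X) :
    a.act 1 ⁻¹' s = s := by
  ext x; simp [a.one_act]

/-- a.e.-invariant sets are null or conull under an ergodic action. -/
private lemma ergodic_ae_invariant (a : MPAction Γ) [Countable Γ] (ha : a.IsErgodic)
    {A : Set a.X} (hA : MeasurableSet A)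
    (hinv : ∀ γ : Γ, a.μ ((a.act γ ⁻¹' A) \ A) = 0) :
    a.μ A = 0 ∨ a.μ A = 1 := by
  set B : Set a.X := ⋃ γ : Γ, a.act γ ⁻¹' A with hB
  have hmeas : MeasurableSet B := MeasurableSet.iUnion fun γ => (a.pres γ).measurable hA
  have hinv' : ∀ δ : Γ, a.act δ ⁻¹' B = B := by
    intro δ
    have h1 : a.act δ ⁻¹' B = ⋃ γ : Γ, a.act (γ * δ) ⁻¹' A := by
      rw [hB, Set.preimage_iUnion]
      exact Set.iUnion_congr fun γ => a.preimage_act_act γ δ A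
    rw [h1]
    ext x
    simp only [Set.mem_iUnion, hB]
    constructor
    · rintro ⟨γ, h⟩; exact ⟨γ * δ, h⟩
    · rintro ⟨γ, h⟩; exact ⟨γ * δ⁻¹, by rwa [inv_mul_cancel_right]⟩
  have hsub : A ⊆ B := fun x hx => Set.mem_iUnion.2 ⟨1, by rwa [a.preimage_act_one]⟩
  have hdiff : a.μ (B \ A) = 0 := by
    refine measure_mono_null ?_ (measure_iUnion_null fun γ => hinv γ)
    intro x hx
    rcases Set.mem_iUnion.1 hx.1 with ⟨γ, h⟩
    exact Set.mem_iUnion.2 ⟨γ, ⟨h, hx.2⟩⟩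
  have hμeq : a.μ B = a.μ A := by
    refine le_antisymm ?_ (measure_mono hsub)
    calc a.μ B = a.μ (A ∪ B \ A) := by rw [Set.union_diff_cancel hsub]
      _ ≤ a.μ A + a.μ (B \ A) := measure_union_le _ _
      _ = a.μ A := by rw [hdiff, add_zero]
  rcases ha B hmeas hinv' with h | h
  · exact Or.inl (by rw [← hμeq]; exact h)
  · exact Or.inr (by rw [← hμeq]; exact h)

/-- An a.e.-invariant measurable `ℝ≥0∞`-valued function is a.e. constant under an
ergodic action. -/
private lemma ergodic_const (a : MPAction Γ) [Countable Γ] (ha : a.IsErgodic)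
    {f : a.X → ℝ≥0∞} (hf : Measurable f)
    (hinv : ∀ γ : Γ, (fun x => f (a.act γ x)) =ᵐ[a.μ] f) :
    ∃ c, f =ᵐ[a.μ] fun _ => c := by
  have hdich : ∀ t : ℝ≥0∞, a.μ {x | t < f x} = 0 ∨ a.μ {x | t < f x} = 1 := by
    intro t
    refine ergodic_ae_invariant a ha (measurableSet_lt measurable_const hf) ?_
    intro γ
    have h0 : a.μ {x | ¬ f (a.act γ x) = f x} = 0 := ae_iff.1 (hinv γ)
    refine measure_mono_null (fun x hx => ?_) h0
    have hx1 : t < f (a.act γ x) := hx.1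
    have hx2 : ¬ t < f x := hx.2
    intro heq
    exact hx2 (heq ▸ hx1)
  set S : Set ℝ≥0∞ := {t | a.μ {x | t < f x} = 0} with hS
  set c := sInf S with hc
  refine ⟨c, ?_⟩
  have hle : ∀ᵐ x ∂a.μ, f x ≤ c := by
    rw [ae_iff]
    have hsub : {x | ¬ f x ≤ c} ⊆
        ⋃ q : ℚ, {x | c < (Real.toNNReal q : ℝ≥0∞) ∧ (Real.toNNReal q : ℝ≥0∞) < f x} := by
      intro x hx
      have hx' : c < f x := not_le.1 hx
      obtain ⟨q, _, h1, h2⟩ := ENNReal.lt_iff_exists_rat_btwn.1 hx'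
      exact Set.mem_iUnion.2 ⟨q, h1, h2⟩
    refine measure_mono_null hsub (measure_iUnion_null fun q => ?_)
    by_cases hq : c < (Real.toNNReal q : ℝ≥0∞)
    · obtain ⟨t, htS, htq⟩ := sInf_lt_iff.1 hq
      refine measure_mono_null (fun x hx => ?_) htS
      exact lt_trans htq hx.2
    · have : {x | c < (Real.toNNReal q : ℝ≥0∞) ∧ (Real.toNNReal q : ℝ≥0∞) < f x} = ∅ := by
        ext x; simp only [Set.mem_setOf_eq, Set.mem_empty_iff_false, iff_false, not_and]
        intro h; exact absurd h hq
      rw [this]; exact measure_empty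
  have hge : ∀ᵐ x ∂a.μ, c ≤ f x := by
    rw [ae_iff]
    have hsub : {x | ¬ c ≤ f x} ⊆
        ⋃ q : ℚ, {x | f x < (Real.toNNReal q : ℝ≥0∞) ∧ (Real.toNNReal q : ℝ≥0∞) < c} := by
      intro x hx
      have hx' : f x < c := not_le.1 hx
      obtain ⟨q, _, h1, h2⟩ := ENNReal.lt_iff_exists_rat_btwn.1 hx'
      exact Set.mem_iUnion.2 ⟨q, h1, h2⟩
    refine measure_mono_null hsub (measure_iUnion_null fun q => ?_)
    by_cases hq : (Real.toNNReal q : ℝ≥0∞) < c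
    · have hqS : (Real.toNNReal q : ℝ≥0∞) ∉ S := fun h => absurd (sInf_le h) (not_le.2 hq)
      have hone : a.μ {x | (Real.toNNReal q : ℝ≥0∞) < f x} = 1 := by
        rcases hdich (Real.toNNReal q : ℝ≥0∞) with h | h
        · exact absurd h hqS
        · exact h
      have hcompl : a.μ ({x | (Real.toNNReal q : ℝ≥0∞) < f x}ᶜ) = 0 := by
        rw [measure_compl (measurableSet_lt measurable_const hf) (measure_ne_top _ _), hone,
          measure_univ, tsub_self]
      refine measure_mono_null (fun x hx => ?_) hcompl
      simp only [Set.mem_compl_iff, Set.mem_setOf_eq, not_lt]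
      exact le_of_lt hx.1
    · have : {x | f x < (Real.toNNReal q : ℝ≥0∞) ∧ (Real.toNNReal q : ℝ≥0∞) < c} = ∅ := by
        ext x; simp only [Set.mem_setOf_eq, Set.mem_empty_iff_false, iff_false, not_and]
        intro _; exact hq
      rw [this]; exact measure_empty
  filter_upwards [hle, hge] with x h1 h2
  exact le_antisymm h1 h2

/-- An invariant measure dominated by an ergodic measure is a multiple of it. -/
private lemma invariant_le_ergodic (a : MPAction Γ) [Countable Γ] (ha : a.IsErgodic)
    (ρ : Measure a.X) (hle : ρ ≤ a.μ)
    (hinv : ∀ (γ : Γ) (B : Set a.X), MeasurableSet B → ρ (a.act γ ⁻¹' B) = ρ B) :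
    ∀ B : Set a.X, MeasurableSet B → ρ B = ρ Set.univ * a.μ B := by
  have hfin : IsFiniteMeasure ρ := isFiniteMeasure_of_le a.μ hle
  have hac : ρ ≪ a.μ := Measure.absolutelyContinuous_of_le hle
  set f := ρ.rnDeriv a.μ with hf
  have hfm : Measurable f := Measure.measurable_rnDeriv ρ a.μ
  have hρ : ∀ B : Set a.X, MeasurableSet B → ρ B = ∫⁻ x in B, f x ∂a.μ := by
    intro B hB
    rw [← withDensity_apply f hB, Measure.withDensity_rnDeriv_eq ρ a.μ hac]
  have hfinv : ∀ γ : Γ, (fun x => f (a.act γ x)) =ᵐ[a.μ] f := by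
    intro γ
    refine ae_eq_of_forall_setLIntegral_eq_of_sigmaFinite
      (hfm.comp (a.pres γ).measurable) hfm ?_
    intro s hs _
    have hs' : MeasurableSet (a.act γ⁻¹ ⁻¹' s) := (a.pres γ⁻¹).measurable hs
    have hind : ∀ x, s.indicator (fun x => f (a.act γ x)) x
        = ((a.act γ⁻¹ ⁻¹' s).indicator f) (a.act γ x) := by
      intro x
      have hmem : a.act γ x ∈ a.act γ⁻¹ ⁻¹' s ↔ x ∈ s := by
        simp only [Set.mem_preimage]
        rw [← a.mul_act, inv_mul_cancel, a.one_act]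
      by_cases hx : x ∈ s
      · rw [Set.indicator_of_mem hx, Set.indicator_of_mem (hmem.2 hx)]
      · rw [Set.indicator_of_notMem hx, Set.indicator_of_notMem (fun h => hx (hmem.1 h))]
    calc ∫⁻ x in s, f (a.act γ x) ∂a.μ
        = ∫⁻ x, s.indicator (fun x => f (a.act γ x)) x ∂a.μ :=
          (lintegral_indicator hs _).symm
      _ = ∫⁻ x, ((a.act γ⁻¹ ⁻¹' s).indicator f) (a.act γ x) ∂a.μ :=
          lintegral_congr hind
      _ = ∫⁻ x, ((a.act γ⁻¹ ⁻¹' s).indicator f) x ∂a.μ :=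
          (a.pres γ).lintegral_comp (hfm.indicator hs')
      _ = ∫⁻ x in a.act γ⁻¹ ⁻¹' s, f x ∂a.μ := lintegral_indicator hs' _
      _ = ρ (a.act γ⁻¹ ⁻¹' s) := (hρ _ hs').symm
      _ = ρ s := hinv γ⁻¹ s hs
      _ = ∫⁻ x in s, f x ∂a.μ := hρ s hs
  obtain ⟨c, hcf⟩ := ergodic_const a ha hfm hfinv
  have hval : ∀ B : Set a.X, MeasurableSet B → ρ B = c * a.μ B := by
    intro B hB
    rw [hρ B hB, lintegral_congr_ae (ae_restrict_of_ae hcf)]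
    simp [Measure.restrict_apply_univ]
  intro B hB
  rw [hval B hB, hval Set.univ MeasurableSet.univ, measure_univ, mul_one]

end AuxTD

/-- **Proposition (Tucker-Drob, Proposition 2.1).** Let `d` be a measure preserving
action of a countable group `Γ`, let `π` be a factor map from `d` onto the identity
action on `(Z, η)`, and let `ν = ∫ ν_z dη` be the corresponding disintegration.  If the
ergodic action `a` is a factor of `d` via `φ`, then for `η`-almost every `z`, `a` is a
factor of `d_z = Γ ↷ (Y, ν_z)` via the same map `φ`. -/
theorem stmt11 (Γ : Type) [Group Γ] [Countable Γ]
    (d : MPAction Γ)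
    (Z : Type) [MeasurableSpace Z] [StandardBorelSpace Z] (η : Measure Z)
    [IsProbabilityMeasure η]
    (π : d.X → Z) (hπ : IsFactorVia d (trivialAction Γ Z η) π)
    (νz : Z → Measure d.X) (hdis : IsDisintegration d η π νz)
    (a : MPAction Γ) (ha : a.IsErgodic)
    (φ : d.X → a.X) (hφ : IsFactorVia d a φ) :
    ∀ᵐ z ∂η, Measure.map φ (νz z) = a.μ ∧
      ∀ γ : Γ, ∀ᵐ y ∂(νz z), φ (d.act γ y) = a.act γ (φ y) := by
  classical
  obtain ⟨hφm, hφmap, hφeq⟩ := hφ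
  obtain ⟨hπm, hπmap, hπeq⟩ := hπ
  have hprob : ∀ z, IsProbabilityMeasure (νz z) := hdis.1
  have hmeasν : ∀ B : Set d.X, MeasurableSet B → Measurable fun z => νz z B := hdis.2.1
  have hfiber : ∀ᵐ z ∂η, νz z (π ⁻¹' {z}) = 1 := hdis.2.2.1
  have hint : ∀ B : Set d.X, MeasurableSet B → d.μ B = ∫⁻ z, νz z B ∂η := hdis.2.2.2
  have hπν : Measure.map π d.μ = η := hπmap
  have hπeq' : ∀ γ : Γ, ∀ᵐ y ∂d.μ, π (d.act γ y) = π y := hπeq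
  letI := upgradeStandardBorel Z
  -- Key claim: for each measurable A, ν_z (φ⁻¹ A) = μ A for a.e. z.
  have keyA : ∀ A : Set a.X, MeasurableSet A → ∀ᵐ z ∂η, νz z (φ ⁻¹' A) = a.μ A := by
    intro A hA
    set g : Z → ℝ≥0∞ := fun z => νz z (φ ⁻¹' A) with hg
    have hgm : Measurable g := hmeasν _ (hφm hA)
    have main : ∀ E : Set Z, MeasurableSet E →
        η E * a.μ A = ∫⁻ z in E, g z ∂η := by
      intro E hE
      set ρ : Measure a.X := Measure.map φ (d.μ.restrict (π ⁻¹' E)) with hρdef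
      have hρ_apply : ∀ B : Set a.X, MeasurableSet B → ρ B = d.μ (φ ⁻¹' B ∩ π ⁻¹' E) := by
        intro B hB
        rw [hρdef, Measure.map_apply hφm hB, Measure.restrict_apply (hφm hB)]
      have hρle : ρ ≤ a.μ := by
        rw [← hφmap]
        exact Measure.map_mono Measure.restrict_le_self hφm
      have hρinv : ∀ (γ : Γ) (B : Set a.X), MeasurableSet B → ρ (a.act γ ⁻¹' B) = ρ B := by
        intro γ B hB
        rw [hρ_apply _ ((a.pres γ).measurable hB), hρ_apply _ hB]
        have hcongr : (φ ⁻¹' (a.act γ ⁻¹' B) ∩ π ⁻¹' E : Set d.X)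
            =ᵐ[d.μ] (d.act γ ⁻¹' (φ ⁻¹' B ∩ π ⁻¹' E) : Set d.X) := by
          rw [Filter.eventuallyEq_set]
          filter_upwards [hφeq γ, hπeq' γ] with y h1 h2
          simp only [Set.mem_inter_iff, Set.mem_preimage]
          rw [h1, h2]
        rw [measure_congr hcongr]
        exact (d.pres γ).measure_preimage ((hφm hB).inter (hπm hE)).nullMeasurableSet
      have hρuniv : ρ Set.univ = η E := by
        rw [hρ_apply _ MeasurableSet.univ]
        have h1 : η E = d.μ (π ⁻¹' E) := by
          rw [← hπν]; exact Measure.map_apply hπm hE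
        rw [h1]
        congr 1
        simp [Set.preimage_univ, Set.univ_inter]
      have hρA : ρ A = ∫⁻ z in E, g z ∂η := by
        rw [hρ_apply A hA, hint (φ ⁻¹' A ∩ π ⁻¹' E) ((hφm hA).inter (hπm hE)), ← lintegral_indicator hE]
        refine lintegral_congr_ae ?_
        filter_upwards [hfiber] with z hz
        by_cases hzE : z ∈ E
        · rw [Set.indicator_of_mem hzE]
          have h0 : νz z ((π ⁻¹' E)ᶜ) = 0 := by
            have hsing : MeasurableSet (π ⁻¹' ({z} : Set Z)) :=
              hπm (measurableSet_singleton z)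
            have hcc : νz z ((π ⁻¹' ({z} : Set Z))ᶜ) = 0 := by
              have := hprob z
              rw [measure_compl hsing (measure_ne_top _ _), hz, measure_univ, tsub_self]
            refine measure_mono_null ?_ hcc
            refine Set.compl_subset_compl.2 (Set.preimage_mono ?_)
            exact Set.singleton_subset_iff.2 hzE
          exact measure_inter_conull h0
        · rw [Set.indicator_of_notMem hzE]
          have hsub : (φ ⁻¹' A ∩ π ⁻¹' E : Set d.X) ⊆ (π ⁻¹' ({z} : Set Z))ᶜ := by
            intro y hy hyz
            have : π y ∈ E := hy.2
            rw [Set.mem_preimage, Set.mem_singleton_iff] at hyz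
            exact hzE (hyz ▸ this)
          refine measure_mono_null hsub ?_
          have hsing : MeasurableSet (π ⁻¹' ({z} : Set Z)) := hπm (measurableSet_singleton z)
          have := hprob z
          rw [measure_compl hsing (measure_ne_top _ _), hz, measure_univ, tsub_self]
      have := invariant_le_ergodic a ha ρ hρle hρinv A hA
      rw [← hρA, this, hρuniv]
    have hlow : ∀ t : ℝ≥0∞, t < a.μ A → η {z | g z ≤ t} = 0 := by
      intro t ht
      set E := {z | g z ≤ t} with hE
      have hEm : MeasurableSet E := measurableSet_le hgm measurable_const
      have h1 := main E hEm
      have h2 : ∫⁻ z in E, g z ∂η ≤ t * η E := by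
        calc ∫⁻ z in E, g z ∂η ≤ ∫⁻ _ in E, t ∂η := by
              refine lintegral_mono_ae ?_
              filter_upwards [ae_restrict_mem hEm] with z hz using hz
          _ = t * η E := by rw [setLIntegral_const]
      by_contra hc
      have hEtop : η E ≠ ⊤ := measure_ne_top η E
      have h3 : a.μ A * η E ≤ t * η E := by
        rw [mul_comm (a.μ A), h1]; exact h2
      exact absurd ((ENNReal.mul_le_mul_iff_left hc hEtop).1 h3) (not_le.2 ht)
    have hhigh : ∀ t : ℝ≥0∞, a.μ A < t → η {z | t ≤ g z} = 0 := by
      intro t ht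
      set E := {z | t ≤ g z} with hE
      have hEm : MeasurableSet E := measurableSet_le measurable_const hgm
      have h1 := main E hEm
      have h2 : t * η E ≤ ∫⁻ z in E, g z ∂η := by
        calc t * η E = ∫⁻ _ in E, t ∂η := (setLIntegral_const _ _).symm
          _ ≤ ∫⁻ z in E, g z ∂η := by
              refine lintegral_mono_ae ?_
              filter_upwards [ae_restrict_mem hEm] with z hz using hz
      by_contra hc
      have hEtop : η E ≠ ⊤ := measure_ne_top η E
      have h3 : t * η E ≤ a.μ A * η E := by
        rw [mul_comm (a.μ A), h1] at *; exact le_trans h2 (le_of_eq rfl)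
      exact absurd ((ENNReal.mul_le_mul_iff_left hc hEtop).1 h3) (not_le.2 ht)
    rw [ae_iff]
    have hsplit : {z | ¬ g z = a.μ A} ⊆ {z | g z < a.μ A} ∪ {z | a.μ A < g z} := by
      intro z hz
      rcases lt_or_gt_of_ne hz with h | h
      · exact Or.inl h
      · exact Or.inr h
    refine measure_mono_null hsplit (measure_union_null ?_ ?_)
    · have hsub : {z | g z < a.μ A} ⊆
          ⋃ q : ℚ, {z | g z ≤ (Real.toNNReal q : ℝ≥0∞) ∧ (Real.toNNReal q : ℝ≥0∞) < a.μ A} := by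
        intro z hz
        obtain ⟨q, _, h1, h2⟩ := ENNReal.lt_iff_exists_rat_btwn.1 hz
        exact Set.mem_iUnion.2 ⟨q, le_of_lt h1, h2⟩
      refine measure_mono_null hsub (measure_iUnion_null fun q => ?_)
      by_cases hq : (Real.toNNReal q : ℝ≥0∞) < a.μ A
      · exact measure_mono_null (fun z hz => hz.1) (hlow _ hq)
      · have : {z | g z ≤ (Real.toNNReal q : ℝ≥0∞) ∧ (Real.toNNReal q : ℝ≥0∞) < a.μ A} = ∅ := by
          ext z
          simp only [Set.mem_setOf_eq, Set.mem_empty_iff_false, iff_false, not_and]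
          intro _; exact hq
        rw [this]; exact measure_empty
    · have hsub : {z | a.μ A < g z} ⊆
          ⋃ q : ℚ, {z | (Real.toNNReal q : ℝ≥0∞) ≤ g z ∧ a.μ A < (Real.toNNReal q : ℝ≥0∞)} := by
        intro z hz
        obtain ⟨q, _, h1, h2⟩ := ENNReal.lt_iff_exists_rat_btwn.1 hz
        exact Set.mem_iUnion.2 ⟨q, le_of_lt h2, h1⟩
      refine measure_mono_null hsub (measure_iUnion_null fun q => ?_)
      by_cases hq : a.μ A < (Real.toNNReal q : ℝ≥0∞)
      · exact measure_mono_null (fun z hz => hz.1) (hhigh _ hq)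
      · have : {z | (Real.toNNReal q : ℝ≥0∞) ≤ g z ∧ a.μ A < (Real.toNNReal q : ℝ≥0∞)} = ∅ := by
          ext z
          simp only [Set.mem_setOf_eq, Set.mem_empty_iff_false, iff_false, not_and]
          intro _; exact hq
        rw [this]; exact measure_empty
  -- countable generating π-system on a.X
  set S0 : Set (Set a.X) := MeasurableSpace.countableGeneratingSet a.X with hS0
  set C : Set (Set a.X) :=
    {t | ∃ F : Set (Set a.X), F.Finite ∧ F ⊆ S0 ∧ F.Nonempty ∧ t = ⋂₀ F} with hC
  have hCcount : C.Countable := by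
    have h1 : {F : Set (Set a.X) | F.Finite ∧ F ⊆ S0}.Countable :=
      Set.countable_setOf_finite_subset MeasurableSpace.countable_countableGeneratingSet
    have h2 : C ⊆ Set.sInter '' {F | F.Finite ∧ F ⊆ S0} := by
      rintro t ⟨F, hF1, hF2, _, rfl⟩
      exact ⟨F, ⟨hF1, hF2⟩, rfl⟩
    exact Set.Countable.mono h2 (h1.image _)
  have hS0meas : ∀ s ∈ S0, MeasurableSet s := by
    intro s hs
    rw [← MeasurableSpace.generateFrom_countableGeneratingSet (α := a.X)]
    exact MeasurableSpace.measurableSet_generateFrom hs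
  have hCmeas : ∀ t ∈ C, MeasurableSet t := by
    rintro t ⟨F, hF1, hF2, _, rfl⟩
    exact MeasurableSet.sInter hF1.countable fun s hs => hS0meas s (hF2 hs)
  have hCpi : IsPiSystem C := by
    rintro s ⟨F, hF1, hF2, hF3, rfl⟩ t ⟨G, hG1, hG2, hG3, rfl⟩ _
    exact ⟨F ∪ G, hF1.union hG1, Set.union_subset hF2 hG2, hF3.inl,
      (Set.sInter_union F G).symm⟩
  have hCgen : (inferInstance : MeasurableSpace a.X) = MeasurableSpace.generateFrom C := by
    refine le_antisymm ?_ (MeasurableSpace.generateFrom_le hCmeas)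
    conv_lhs => rw [← MeasurableSpace.generateFrom_countableGeneratingSet (α := a.X)]
    refine MeasurableSpace.generateFrom_mono ?_
    intro s hs
    exact ⟨{s}, Set.finite_singleton s, Set.singleton_subset_iff.2 hs,
      Set.singleton_nonempty s, (Set.sInter_singleton s).symm⟩
  have part1 : ∀ᵐ z ∂η, Measure.map φ (νz z) = a.μ := by
    have hall : ∀ᵐ z ∂η, ∀ t ∈ C, νz z (φ ⁻¹' t) = a.μ t :=
      (ae_ball_iff hCcount).2 fun t ht => keyA t (hCmeas t ht)
    filter_upwards [hall] with z hz
    haveI := hprob z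
    haveI : IsProbabilityMeasure (Measure.map φ (νz z)) :=
      Measure.isProbabilityMeasure_map hφm.aemeasurable
    refine ext_of_generate_finite C hCgen hCpi ?_ ?_
    · intro s hs
      rw [Measure.map_apply hφm (hCmeas s hs)]
      exact hz s hs
    · rw [measure_univ, measure_univ]
  have part2 : ∀ᵐ z ∂η, ∀ γ : Γ, ∀ᵐ y ∂(νz z), φ (d.act γ y) = a.act γ (φ y) := by
    rw [ae_all_iff]
    intro γ
    letI := upgradeStandardBorel a.X
    have hNm : MeasurableSet {y | φ (d.act γ y) = a.act γ (φ y)} :=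
      MeasureTheory.StronglyMeasurable.measurableSet_eq_fun
        (Measurable.stronglyMeasurable (hφm.comp (d.pres γ).measurable))
        (Measurable.stronglyMeasurable ((a.pres γ).measurable.comp hφm))
    have hN0 : d.μ ({y | φ (d.act γ y) = a.act γ (φ y)}ᶜ) = 0 := by
      have := ae_iff.1 (hφeq γ)
      rw [Set.compl_setOf]
      exact this
    have hzero : ∫⁻ z, νz z ({y | φ (d.act γ y) = a.act γ (φ y)}ᶜ) ∂η = 0 := by
      rw [← hint _ hNm.compl]
      exact hN0
    have hae := (lintegral_eq_zero_iff (hmeasν _ hNm.compl)).1 hzero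
    filter_upwards [hae] with z hz
    rw [ae_iff]
    rw [← Set.compl_setOf]
    exact hz
  filter_upwards [part1, part2] with z h1 h2
  exact ⟨h1, h2⟩
end

section
/- Let φ:Γ↷^b(X,μ)→Γ↷^{ι_η}(Z,η) and ψ:Γ↷^d(Y,ν)→Γ↷^{ι_η}(Z,η) be factor maps from measure preserving actions b and d of a countable group Γ onto the identity action ι_η. Let μ = ∫_z μ_z dη and ν = ∫_z ν_z dη be the disintegrations of μ and ν via φ and ψ respectively, and set b_z = Γ↷^b(X,μ_z), d_z = Γ↷^d(Y,ν_z). Then: (1) if b_z ≺ d_z for all z ∈ Z then b ≺ d; (2) if b ≺ d_z for all z ∈ Z then ι_η×b ≺ d, and if b_z ≺ d for all z ∈ Z then b ≺ ι_η×d; (3) if b_z ∼ d_z for all z ∈ Z then b ∼ d, and if b ∼ d_z for all z ∈ Z then ι_η×b ∼ d. -/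
open scoped NNReal ENNReal

open MeasureTheory Topology Filter

variable {Γ : Type} [Group Γ]

open MeasureTheory Topology Filter

open scoped symmDiff
open Set

section Aux

lemma measurableSet_of_gen {α : Type*} {m : MeasurableSpace α} {𝒮 : Set (Set α)}
    (h : m = MeasurableSpace.generateFrom 𝒮) {s : Set α} (hs : s ∈ 𝒮) :
    MeasurableSet[m] s := by
  rw [h]
  exact MeasurableSpace.measurableSet_generateFrom hs

lemma symmDiff_inter_sub {α : Type*} (s₁ s₂ t₁ t₂ : Set α) :
    (s₁ ∩ s₂) ∆ (t₁ ∩ t₂) ⊆ (s₁ ∆ t₁) ∪ (s₂ ∆ t₂) := by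
  intro x hx
  simp only [Set.mem_symmDiff, Set.mem_inter_iff, Set.mem_union] at *
  tauto

lemma abs_toReal_sub_le {Y : Type*} [MeasurableSpace Y] (ν : Measure Y) [IsFiniteMeasure ν]
    (s t : Set Y) : |(ν s).toReal - (ν t).toReal| ≤ (ν (s ∆ t)).toReal := by
  have hsub : ∀ u v : Set Y, ν u ≤ ν v + ν (u ∆ v) := by
    intro u v
    refine (measure_mono (fun x hx => ?_)).trans (measure_union_le _ _)
    by_cases hv : x ∈ v
    · exact Or.inl hv
    · exact Or.inr (Set.mem_symmDiff.2 (Or.inl ⟨hx, hv⟩))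
  have h1 : (ν s).toReal ≤ (ν t).toReal + (ν (s ∆ t)).toReal := by
    rw [← ENNReal.toReal_add (measure_ne_top _ _) (measure_ne_top _ _)]
    exact ENNReal.toReal_mono (by finiteness) (hsub s t)
  have h2 : (ν t).toReal ≤ (ν s).toReal + (ν (s ∆ t)).toReal := by
    rw [← ENNReal.toReal_add (measure_ne_top _ _) (measure_ne_top _ _)]
    have := hsub t s
    rw [symmDiff_comm] at this
    exact ENNReal.toReal_mono (by finiteness) this
  rw [abs_sub_le_iff]
  constructor <;> linarith

lemma preimage_symmDiff' {α β : Type*} (f : α → β) (s t : Set β) :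
    f ⁻¹' (s ∆ t) = (f ⁻¹' s) ∆ (f ⁻¹' t) := by
  simp [Set.symmDiff_def, Set.preimage_union, Set.preimage_diff]

/-- disjointification of a `k+1`-tuple of sets into a partition -/
def djf {Y : Type} (k : ℕ) (C : Fin (k+1) → Set Y) : Fin (k+1) → Set Y := fun i =>
  if i = Fin.last k then
    (⋃ j : Fin (k+1), ⋃ (_ : j ≠ Fin.last k), (C j \ ⋃ l : Fin (k+1), ⋃ (_ : l < j), C l))ᶜ
  else C i \ ⋃ l : Fin (k+1), ⋃ (_ : l < i), C l

lemma djf_meas {Y : Type} [MeasurableSpace Y] (k : ℕ) (C : Fin (k+1) → Set Y)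
    (hC : ∀ i, MeasurableSet (C i)) (i : Fin (k+1)) : MeasurableSet (djf k C i) := by
  unfold djf
  split
  · exact (MeasurableSet.iUnion fun j => MeasurableSet.iUnion fun _ =>
      (hC j).diff (MeasurableSet.iUnion fun l => MeasurableSet.iUnion fun _ => hC l)).compl
  · exact (hC i).diff (MeasurableSet.iUnion fun l => MeasurableSet.iUnion fun _ => hC l)

lemma djf_isPartition {Y : Type} [MeasurableSpace Y] (k : ℕ) (C : Fin (k+1) → Set Y)
    (hC : ∀ i, MeasurableSet (C i)) : IsPartition (djf k C) := by
  refine ⟨djf_meas k C hC, ?_, ?_⟩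
  · intro i j hij
    rw [Set.disjoint_left]
    intro x hxi hxj
    unfold djf at hxi hxj
    by_cases hi : i = Fin.last k
    · rw [if_pos hi] at hxi
      have hj : j ≠ Fin.last k := fun h => hij (hi.trans h.symm)
      rw [if_neg hj] at hxj
      exact hxi (Set.mem_iUnion.2 ⟨j, Set.mem_iUnion.2 ⟨hj, hxj⟩⟩)
    · rw [if_neg hi] at hxi
      by_cases hj : j = Fin.last k
      · rw [if_pos hj] at hxj
        exact hxj (Set.mem_iUnion.2 ⟨i, Set.mem_iUnion.2 ⟨hi, hxi⟩⟩)
      · rw [if_neg hj] at hxj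
        rcases lt_or_gt_of_ne hij with h | h
        · exact hxj.2 (Set.mem_iUnion.2 ⟨i, Set.mem_iUnion.2 ⟨h, hxi.1⟩⟩)
        · exact hxi.2 (Set.mem_iUnion.2 ⟨j, Set.mem_iUnion.2 ⟨h, hxj.1⟩⟩)
  · ext x
    simp only [Set.mem_iUnion, Set.mem_univ, iff_true]
    by_cases hx : x ∈ ⋃ j : Fin (k+1), ⋃ (_ : j ≠ Fin.last k),
        (C j \ ⋃ l : Fin (k+1), ⋃ (_ : l < j), C l)
    · obtain ⟨j, hj⟩ := Set.mem_iUnion.1 hx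
      obtain ⟨hjne, hxj⟩ := Set.mem_iUnion.1 hj
      exact ⟨j, by rw [djf, if_neg hjne]; exact hxj⟩
    · exact ⟨Fin.last k, by rw [djf, if_pos rfl]; exact hx⟩

lemma djf_symmDiff_subset {Y : Type} [MeasurableSpace Y] (k : ℕ) (C B : Fin (k+1) → Set Y)
    (hB : IsPartition B) (i : Fin (k+1)) :
    (djf k C i) ∆ (B i) ⊆ ⋃ j, (C j ∆ B j) := by
  have hcover : ∀ x : Y, ∃ j, x ∈ B j := by
    intro x
    have := hB.2.2
    have : x ∈ ⋃ j, B j := this ▸ Set.mem_univ x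
    exact Set.mem_iUnion.1 this
  have hdisj := hB.2.1
  -- main pointwise argument for the non-last cells
  have key : ∀ (m : Fin (k+1)) (x : Y), x ∈ B m →
      x ∉ C m \ ⋃ l : Fin (k+1), ⋃ (_ : l < m), C l → x ∈ ⋃ j, (C j ∆ B j) := by
    intro m x hxB hxE
    by_cases hxC : x ∈ C m
    · have : x ∈ ⋃ l : Fin (k+1), ⋃ (_ : l < m), C l := by
        by_contra h; exact hxE ⟨hxC, h⟩
      obtain ⟨l, hl⟩ := Set.mem_iUnion.1 this
      obtain ⟨hlm, hxl⟩ := Set.mem_iUnion.1 hl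
      have hxBl : x ∉ B l := fun h => (hdisj l m (ne_of_lt hlm)).ne_of_mem h hxB rfl
      exact Set.mem_iUnion.2 ⟨l, Set.mem_symmDiff.2 (Or.inl ⟨hxl, hxBl⟩)⟩
    · exact Set.mem_iUnion.2 ⟨m, Set.mem_symmDiff.2 (Or.inr ⟨hxB, hxC⟩)⟩
  intro x hx
  rw [Set.mem_symmDiff] at hx
  unfold djf at hx
  by_cases hi : i = Fin.last k
  · rw [if_pos hi] at hx
    rcases hx with ⟨hx1, hx2⟩ | ⟨hx1, hx2⟩
    · -- x in complement, not in B i : x ∈ B m for some m ≠ last, x ∉ E m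
      obtain ⟨m, hm⟩ := hcover x
      have hmne : m ≠ Fin.last k := by
        rintro rfl; exact hx2 (hi ▸ hm)
      refine key m x hm ?_
      intro hE
      exact hx1 (Set.mem_iUnion.2 ⟨m, Set.mem_iUnion.2 ⟨hmne, hE⟩⟩)
    · -- x ∈ B i (i = last), x in the union of E j for j ≠ last
      rw [Set.notMem_compl_iff] at hx2
      obtain ⟨j, hj⟩ := Set.mem_iUnion.1 hx2
      obtain ⟨hjne, hxj⟩ := Set.mem_iUnion.1 hj
      have hxBj : x ∉ B j := fun h =>
        (hdisj j i (fun he => hjne (he.trans hi))).ne_of_mem h hx1 rfl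
      exact Set.mem_iUnion.2 ⟨j, Set.mem_symmDiff.2 (Or.inl ⟨hxj.1, hxBj⟩)⟩
  · rw [if_neg hi] at hx
    rcases hx with ⟨hx1, hx2⟩ | ⟨hx1, hx2⟩
    · exact Set.mem_iUnion.2 ⟨i, Set.mem_symmDiff.2 (Or.inl ⟨hx1.1, hx2⟩)⟩
    · exact key i x hx1 hx2

variable {Γ : Type} [Group Γ]

lemma MPAction.image_act_eq (a : MPAction Γ) (γ : Γ) (S : Set a.X) :
    a.act γ '' S = a.act γ⁻¹ ⁻¹' S := by
  ext x
  simp only [Set.mem_image, Set.mem_preimage]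
  constructor
  · rintro ⟨s, hs, rfl⟩
    have h : a.act γ⁻¹ (a.act γ s) = s := by
      rw [← a.mul_act, inv_mul_cancel, a.one_act]
    rwa [h]
  · intro hx
    exact ⟨a.act γ⁻¹ x, hx, by rw [← a.mul_act, mul_inv_cancel, a.one_act]⟩

lemma MPAction.measurable_act (a : MPAction Γ) (γ : Γ) : Measurable (a.act γ) :=
  (a.pres γ).measurable

lemma MPAction.measurableSet_image_act (a : MPAction Γ) (γ : Γ) {S : Set a.X}
    (hS : MeasurableSet S) : MeasurableSet (a.act γ '' S) := by
  rw [a.image_act_eq]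
  exact a.measurable_act γ⁻¹ hS

end Aux


section Approx

variable {Γ : Type} [Group Γ]

/-- Replace the approximating partition by one from a countable generating set algebra,
at the cost of `ε/4`. -/
lemma approx_step {Xb : Type} [MeasurableSpace Xb]
    (d : MPAction Γ) (μ' : Measure Xb) (ν' : Measure d.X) [IsProbabilityMeasure ν']
    (bact : Γ → Xb → Xb)
    (𝒮 : Set (Set d.X)) (h𝒮alg : IsSetAlgebra 𝒮)
    (h𝒮gen : (inferInstance : MeasurableSpace d.X) = .generateFrom 𝒮)
    (hw : WCgen bact μ' d.act ν')
    (k : ℕ) (A : Fin (k+1) → Set Xb) (hA : IsPartition A) (F : Finset Γ) (ε : ℝ) (hε : 0 < ε) :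
    ∃ C : Fin (k+1) → Set d.X, (∀ i, C i ∈ 𝒮) ∧
      ∀ γ ∈ F, ∀ i j, |(μ' (bact γ '' A i ∩ A j)).toReal -
        (ν' (d.act γ '' djf k C i ∩ djf k C j)).toReal| < ε/2 := by
  classical
  have h𝒮meas : ∀ s ∈ 𝒮, MeasurableSet s := fun s hs => measurableSet_of_gen h𝒮gen hs
  obtain ⟨B, hBpart, hBbd⟩ := hw (k+1) A hA F (ε/4) (by positivity)
  set ρ : Measure d.X := ν' + ∑ γ ∈ F, Measure.map (d.act γ⁻¹) ν' with hρ
  have hmapfin : ∀ γ : Γ, (Measure.map (d.act γ⁻¹) ν') Set.univ = 1 := by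
    intro γ
    rw [Measure.map_apply (d.measurable_act γ⁻¹) MeasurableSet.univ]
    simp
  haveI : IsFiniteMeasure ρ := by
    constructor
    rw [hρ, Measure.add_apply, Measure.finset_sum_apply]
    refine ENNReal.add_lt_top.2 ⟨by simp, ?_⟩
    refine ENNReal.sum_lt_top.2 fun γ _ => ?_
    rw [hmapfin γ]
    exact ENNReal.one_lt_top
  have hdense : ρ.MeasureDense 𝒮 :=
    Measure.MeasureDense.of_generateFrom_isSetAlgebra_finite ρ h𝒮alg h𝒮gen
  set δ : ℝ := ε / (8 * (k+1)) with hδ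
  have hδpos : 0 < δ := by positivity
  have hchoice : ∀ i : Fin (k+1), ∃ t ∈ 𝒮, ρ ((B i) ∆ t) < ENNReal.ofReal δ := fun i =>
    hdense.approx (B i) (hBpart.1 i) (measure_ne_top _ _) δ hδpos
  choose C hCmem hCapprox using hchoice
  have hCmeas : ∀ i, MeasurableSet (C i) := fun i => h𝒮meas _ (hCmem i)
  set D := djf k C with hD
  have hDmeas : ∀ i, MeasurableSet (D i) := djf_meas k C hCmeas
  have hνle : ∀ s : Set d.X, ν' s ≤ ρ s := by
    intro s
    rw [hρ, Measure.add_apply]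
    exact le_self_add
  have hmaple : ∀ γ ∈ F, ∀ s : Set d.X, (Measure.map (d.act γ⁻¹) ν') s ≤ ρ s := by
    intro γ hγ s
    rw [hρ, Measure.add_apply, Measure.finset_sum_apply]
    calc (Measure.map (d.act γ⁻¹) ν') s
        ≤ ∑ γ' ∈ F, (Measure.map (d.act γ'⁻¹) ν') s :=
          Finset.single_le_sum (f := fun γ' => (Measure.map (d.act γ'⁻¹) ν') s)
            (fun _ _ => zero_le) hγ
      _ ≤ _ := le_add_self
  -- bound on ρ (D i ∆ B i)
  have hkey : ∀ i, ρ (D i ∆ B i) ≤ (k+1 : ℕ) * ENNReal.ofReal δ := by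
    intro i
    calc ρ (D i ∆ B i) ≤ ρ (⋃ j, (C j ∆ B j)) :=
          measure_mono (djf_symmDiff_subset k C B hBpart i)
      _ ≤ ∑' j : Fin (k+1), ρ (C j ∆ B j) := measure_iUnion_le _
      _ = ∑ j : Fin (k+1), ρ (C j ∆ B j) := tsum_fintype _
      _ ≤ ∑ _j : Fin (k+1), ENNReal.ofReal δ := by
          refine Finset.sum_le_sum fun j _ => ?_
          rw [symmDiff_comm]
          exact (hCapprox j).le
      _ = (k+1 : ℕ) * ENNReal.ofReal δ := by
          rw [Finset.sum_const, Finset.card_univ, Fintype.card_fin, nsmul_eq_mul]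
  refine ⟨C, hCmem, ?_⟩
  intro γ hγ i j
  have himg : ∀ S T : Set d.X, MeasurableSet S → MeasurableSet T →
      ν' ((d.act γ '' S) ∆ (d.act γ '' T)) ≤ ρ (S ∆ T) := by
    intro S T hS hT
    rw [d.image_act_eq, d.image_act_eq, ← preimage_symmDiff']
    rw [← Measure.map_apply (d.measurable_act γ⁻¹) (hS.symmDiff hT)]
    exact hmaple γ hγ _
  have hsd : ν' ((d.act γ '' D i ∩ D j) ∆ (d.act γ '' B i ∩ B j)) ≤
      (2 * (k+1) : ℕ) * ENNReal.ofReal δ := by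
    calc ν' ((d.act γ '' D i ∩ D j) ∆ (d.act γ '' B i ∩ B j))
        ≤ ν' (((d.act γ '' D i) ∆ (d.act γ '' B i)) ∪ (D j ∆ B j)) :=
          measure_mono (symmDiff_inter_sub _ _ _ _)
      _ ≤ ν' ((d.act γ '' D i) ∆ (d.act γ '' B i)) + ν' (D j ∆ B j) := measure_union_le _ _
      _ ≤ ρ (D i ∆ B i) + ρ (D j ∆ B j) := by
          exact add_le_add (himg _ _ (hDmeas i) (hBpart.1 i)) (hνle _)
      _ ≤ (k+1 : ℕ) * ENNReal.ofReal δ + (k+1 : ℕ) * ENNReal.ofReal δ :=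
          add_le_add (hkey i) (hkey j)
      _ = (2 * (k+1) : ℕ) * ENNReal.ofReal δ := by push_cast; ring
  have hreal : |(ν' (d.act γ '' D i ∩ D j)).toReal - (ν' (d.act γ '' B i ∩ B j)).toReal|
      ≤ ε / 4 := by
    refine (abs_toReal_sub_le ν' _ _).trans ?_
    have h1 : (ν' ((d.act γ '' D i ∩ D j) ∆ (d.act γ '' B i ∩ B j))).toReal ≤
        ((2 * (k+1) : ℕ) * ENNReal.ofReal δ).toReal :=
      ENNReal.toReal_mono (by finiteness) hsd
    refine h1.trans ?_
    rw [ENNReal.toReal_mul, ENNReal.toReal_natCast, ENNReal.toReal_ofReal hδpos.le, hδ]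
    rw [show ((2 * (k+1) : ℕ) : ℝ) = 2 * ((k:ℝ)+1) by push_cast; ring]
    rw [show (2:ℝ) * ((k:ℝ)+1) * (ε / (8 * ((k:ℝ)+1))) = ε/4 by
      field_simp; ring]
  have hB' := hBbd γ hγ i j
  calc |(μ' (bact γ '' A i ∩ A j)).toReal - (ν' (d.act γ '' D i ∩ D j)).toReal|
      ≤ |(μ' (bact γ '' A i ∩ A j)).toReal - (ν' (d.act γ '' B i ∩ B j)).toReal| +
        |(ν' (d.act γ '' B i ∩ B j)).toReal - (ν' (d.act γ '' D i ∩ D j)).toReal| := by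
        exact abs_sub_le _ _ _
    _ < ε/4 + ε/4 := by
        refine add_lt_add_of_lt_of_le hB' ?_
        rw [abs_sub_comm]; exact hreal
    _ = ε/2 := by ring

end Approx


section Core

variable {Γ : Type} [Group Γ]

/-- Core lemma: weak containment of fibers over a common factor implies weak
containment globally. -/
lemma core_wc {Z : Type} [MeasurableSpace Z] [StandardBorelSpace Z]
    (η : Measure Z) [IsProbabilityMeasure η]
    (b d : MPAction Γ) (ψ : d.X → Z) (hψm : Measurable ψ)
    (hψe : ∀ γ : Γ, ∀ᵐ y ∂d.μ, ψ (d.act γ y) = ψ y)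
    (μz : Z → Measure b.X) (hμp : ∀ z, IsProbabilityMeasure (μz z))
    (hμm : ∀ B : Set b.X, MeasurableSet B → Measurable fun z => μz z B)
    (hμi : ∀ B : Set b.X, MeasurableSet B → b.μ B = ∫⁻ z, μz z B ∂η)
    (νz : Z → Measure d.X) (hνp : ∀ z, IsProbabilityMeasure (νz z))
    (hνm : ∀ B : Set d.X, MeasurableSet B → Measurable fun z => νz z B)
    (hνf : ∀ᵐ z ∂η, νz z (ψ ⁻¹' {z}) = 1)
    (hνi : ∀ B : Set d.X, MeasurableSet B → d.μ B = ∫⁻ z, νz z B ∂η)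
    (h : ∀ z, WCgen b.act (μz z) d.act (νz z)) : b.WC d := by
  classical
  intro k A hA F ε hε
  obtain _ | k := k
  · exfalso
    have h0 := hA.2.2
    rw [Set.iUnion_of_empty] at h0
    have h1 : b.μ Set.univ = 0 := by rw [← h0]; exact measure_empty
    rw [measure_univ] at h1
    exact one_ne_zero h1
  -- countable generating set algebra on d.X
  set 𝒮 : Set (Set d.X) :=
    MeasureTheory.generateSetAlgebra (MeasurableSpace.countableGeneratingSet d.X) with h𝒮
  have h𝒮alg : IsSetAlgebra 𝒮 := isSetAlgebra_generateSetAlgebra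
  have h𝒮gen : (inferInstance : MeasurableSpace d.X) = .generateFrom 𝒮 := by
    rw [h𝒮, generateFrom_generateSetAlgebra_eq,
      MeasurableSpace.generateFrom_countableGeneratingSet]
  have h𝒮count : 𝒮.Countable :=
    countable_generateSetAlgebra MeasurableSpace.countable_countableGeneratingSet
  have h𝒮meas : ∀ s ∈ 𝒮, MeasurableSet s := fun s hs => measurableSet_of_gen h𝒮gen hs
  have h𝒮empty : (∅ : Set d.X) ∈ 𝒮 := h𝒮alg.empty_mem
  -- enumerate all candidate tuples from the algebra
  haveI : Countable ↥𝒮 := h𝒮count.to_subtype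
  haveI : Nonempty ↥𝒮 := ⟨⟨∅, h𝒮empty⟩⟩
  obtain ⟨v, hv⟩ := exists_surjective_nat (Fin (k+1) → ↥𝒮)
  set raw : ℕ → Fin (k+1) → Set d.X := fun n i => (v n i : Set d.X) with hraw
  have hrawmem : ∀ n i, raw n i ∈ 𝒮 := fun n i => (v n i).2
  have hrawmeas : ∀ n i, MeasurableSet (raw n i) := fun n i => h𝒮meas _ (hrawmem n i)
  set Q : ℕ → Fin (k+1) → Set d.X := fun n => djf k (raw n) with hQ
  have hQmeas : ∀ n i, MeasurableSet (Q n i) := fun n => djf_meas k (raw n) (hrawmeas n)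
  have hQpart : ∀ n, IsPartition (Q n) := fun n => djf_isPartition k (raw n) (hrawmeas n)
  -- the sets on the source side
  set SA : Γ → Fin (k+1) → Fin (k+1) → Set b.X :=
    fun γ i j => b.act γ '' A i ∩ A j with hSA
  have hSAmeas : ∀ γ i j, MeasurableSet (SA γ i j) := fun γ i j =>
    (b.measurableSet_image_act γ (hA.1 i)).inter (hA.1 j)
  -- the good property
  set P : Z → ℕ → Prop := fun z n => ∀ γ ∈ F, ∀ i j,
    |(μz z (SA γ i j)).toReal - (νz z (d.act γ '' Q n i ∩ Q n j)).toReal| < ε/2 with hP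
  have hex : ∀ z, ∃ n, P z n := by
    intro z
    haveI := hνp z
    obtain ⟨C, hCmem, hCbd⟩ := approx_step d (μz z) (νz z) b.act 𝒮 h𝒮alg h𝒮gen (h z)
      k A hA F ε hε
    obtain ⟨n, hn⟩ := hv (fun i => (⟨C i, hCmem i⟩ : ↥𝒮))
    refine ⟨n, fun γ hγ i j => ?_⟩
    have hrawC : raw n = C := by
      funext i
      rw [hraw]
      simp only [hn]
    rw [hQ]
    simp only [hrawC]
    exact hCbd γ hγ i j
  -- measurability of the good property
  have hPmeas : ∀ n, MeasurableSet {z | P z n} := by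
    intro n
    have : {z | P z n} = ⋂ γ ∈ F, ⋂ i, ⋂ j,
        {z | |(μz z (SA γ i j)).toReal - (νz z (d.act γ '' Q n i ∩ Q n j)).toReal| < ε/2} := by
      ext z
      simp only [hP, Set.mem_setOf_eq, Set.mem_iInter]
    rw [this]
    refine MeasurableSet.biInter F.countable_toSet fun γ _ => ?_
    refine MeasurableSet.iInter fun i => MeasurableSet.iInter fun j => ?_
    have hTm : MeasurableSet (d.act γ '' Q n i ∩ Q n j) :=
      (d.measurableSet_image_act γ (hQmeas n i)).inter (hQmeas n j)
    have hm1 : Measurable fun z => (μz z (SA γ i j)).toReal :=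
      (hμm _ (hSAmeas γ i j)).ennreal_toReal
    have hm2 : Measurable fun z => (νz z (d.act γ '' Q n i ∩ Q n j)).toReal :=
      (hνm _ hTm).ennreal_toReal
    exact measurableSet_lt ((hm1.sub hm2).abs) measurable_const
  set N : Z → ℕ := fun z => Nat.find (hex z) with hN
  have hPN : ∀ z, P z (N z) := fun z => Nat.find_spec (hex z)
  have hNmeas : ∀ n, MeasurableSet {z | N z = n} := by
    intro n
    have : {z | N z = n} = {z | P z n} ∩ ⋂ m ∈ Finset.range n, {z | P z m}ᶜ := by
      ext z
      simp only [hN, Set.mem_setOf_eq, Nat.find_eq_iff (hex z), Set.mem_inter_iff,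
        Set.mem_iInter, Finset.mem_range, Set.mem_compl_iff]
    rw [this]
    exact (hPmeas n).inter
      (MeasurableSet.biInter (Finset.range n).countable_toSet fun m _ => (hPmeas m).compl)
  -- the assembled partition
  set B : Fin (k+1) → Set d.X := fun i => ⋃ n, ψ ⁻¹' {z | N z = n} ∩ Q n i with hB
  have hBmeas : ∀ i, MeasurableSet (B i) := fun i =>
    MeasurableSet.iUnion fun n => (hψm (hNmeas n)).inter (hQmeas n i)
  have hBmem : ∀ (w : d.X) (l : Fin (k+1)), w ∈ B l ↔ w ∈ Q (N (ψ w)) l := by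
    intro w l
    simp only [hB, Set.mem_iUnion, Set.mem_inter_iff, Set.mem_preimage, Set.mem_setOf_eq]
    constructor
    · rintro ⟨m, hm1, hm2⟩
      rw [hm1]
      exact hm2
    · intro hw
      exact ⟨N (ψ w), rfl, hw⟩
  have hBpart : IsPartition B := by
    refine ⟨hBmeas, ?_, ?_⟩
    · intro i j hij
      rw [Set.disjoint_left]
      intro y hyi hyj
      rw [hBmem] at hyi hyj
      exact ((hQpart (N (ψ y))).2.1 i j hij).ne_of_mem hyi hyj rfl
    · ext y
      simp only [Set.mem_univ, iff_true, Set.mem_iUnion]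
      have : y ∈ ⋃ i, Q (N (ψ y)) i := (hQpart (N (ψ y))).2.2 ▸ Set.mem_univ y
      obtain ⟨i, hi⟩ := Set.mem_iUnion.1 this
      exact ⟨i, (hBmem y i).2 hi⟩
  refine ⟨B, hBpart, ?_⟩
  intro γ hγ i j
  -- null set where ψ is not invariant under γ⁻¹
  have hbad : d.μ {y | ¬ ψ (d.act γ⁻¹ y) = ψ y} = 0 := by
    have := hψe γ⁻¹
    rwa [ae_iff] at this
  obtain ⟨G₀, hG₀sub, hG₀meas, hG₀null⟩ := exists_measurable_superset_of_null hbad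
  have hG₀z : ∀ᵐ z ∂η, νz z G₀ = 0 := by
    have hint : ∫⁻ z, νz z G₀ ∂η = 0 := by rw [← hνi G₀ hG₀meas, hG₀null]
    have := (lintegral_eq_zero_iff (hνm G₀ hG₀meas)).1 hint
    filter_upwards [this] with z hz using hz
  set T : Set d.X := d.act γ '' B i ∩ B j with hT
  have hTmeas : MeasurableSet T := (d.measurableSet_image_act γ (hBmeas i)).inter (hBmeas j)
  have hQT : ∀ n, MeasurableSet (d.act γ '' Q n i ∩ Q n j) := fun n =>
    (d.measurableSet_image_act γ (hQmeas n i)).inter (hQmeas n j)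
  -- the key a.e. bound
  have key : ∀ᵐ z ∂η, |(μz z (SA γ i j)).toReal - (νz z T).toReal| ≤ ε/2 := by
    filter_upwards [hνf, hG₀z] with z h1 h2
    haveI := hνp z
    set n := N z with hn
    set W : Set d.X := ψ ⁻¹' {z} ∩ G₀ᶜ with hW
    have hWc : νz z Wᶜ = 0 := by
      rw [hW, Set.compl_inter, compl_compl]
      refine measure_union_null ?_ h2
      have := measure_compl (μ := νz z) (hψm (measurableSet_singleton z)) (measure_ne_top _ _)
      rw [h1, measure_univ] at this
      simpa using this
    have hWsame : T ∩ W = (d.act γ '' Q n i ∩ Q n j) ∩ W := by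
      ext y
      simp only [Set.mem_inter_iff, hT]
      constructor
      · rintro ⟨⟨hyi, hyj⟩, hyW⟩
        refine ⟨⟨?_, ?_⟩, hyW⟩
        · rw [d.image_act_eq] at hyi ⊢
          rw [Set.mem_preimage] at hyi ⊢
          rw [hBmem] at hyi
          have hψ1 : ψ (d.act γ⁻¹ y) = ψ y := by
            by_contra hne
            exact hyW.2 (hG₀sub hne)
          have hψ2 : ψ y = z := hyW.1
          rwa [hψ1, hψ2] at hyi
        · rw [hBmem] at hyj
          have hψ2 : ψ y = z := hyW.1
          rwa [hψ2] at hyj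
      · rintro ⟨⟨hyi, hyj⟩, hyW⟩
        refine ⟨⟨?_, ?_⟩, hyW⟩
        · rw [d.image_act_eq] at hyi ⊢
          rw [Set.mem_preimage] at hyi ⊢
          rw [hBmem]
          have hψ1 : ψ (d.act γ⁻¹ y) = ψ y := by
            by_contra hne
            exact hyW.2 (hG₀sub hne)
          have hψ2 : ψ y = z := hyW.1
          rwa [hψ1, hψ2]
        · rw [hBmem]
          have hψ2 : ψ y = z := hyW.1
          rwa [hψ2]
    have hWe : ∀ S : Set d.X, νz z S = νz z (S ∩ W) := by
      intro S
      refine le_antisymm ?_ (measure_mono Set.inter_subset_left)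
      calc νz z S ≤ νz z ((S ∩ W) ∪ Wᶜ) := by
            refine measure_mono fun y hy => ?_
            by_cases hw : y ∈ W
            · exact Or.inl ⟨hy, hw⟩
            · exact Or.inr hw
        _ ≤ νz z (S ∩ W) + νz z Wᶜ := measure_union_le _ _
        _ = νz z (S ∩ W) := by rw [hWc, add_zero]
    have hEq : νz z T = νz z (d.act γ '' Q n i ∩ Q n j) := by
      rw [hWe T, hWe (d.act γ '' Q n i ∩ Q n j), hWsame]
    rw [hEq]
    exact (hPN z γ hγ i j).le
  -- final integration
  rw [hμi _ (hSAmeas γ i j), hνi _ hTmeas]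
  set f : Z → ℝ := fun z => (μz z (SA γ i j)).toReal with hf
  set g : Z → ℝ := fun z => (νz z T).toReal with hg
  have hfm : Measurable f := (hμm _ (hSAmeas γ i j)).ennreal_toReal
  have hgm : Measurable g := (hνm _ hTmeas).ennreal_toReal
  have hfb : ∀ z, ‖f z‖ ≤ 1 := by
    intro z
    haveI := hμp z
    rw [hf, Real.norm_eq_abs, abs_of_nonneg ENNReal.toReal_nonneg]
    simpa using ENNReal.toReal_mono ENNReal.one_ne_top prob_le_one
  have hgb : ∀ z, ‖g z‖ ≤ 1 := by
    intro z
    haveI := hνp z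
    rw [hg, Real.norm_eq_abs, abs_of_nonneg ENNReal.toReal_nonneg]
    simpa using ENNReal.toReal_mono ENNReal.one_ne_top prob_le_one
  have hfint : Integrable f η :=
    Integrable.mono' (integrable_const 1) hfm.aestronglyMeasurable (ae_of_all _ hfb)
  have hgint : Integrable g η :=
    Integrable.mono' (integrable_const 1) hgm.aestronglyMeasurable (ae_of_all _ hgb)
  have hflt : ∀ᵐ z ∂η, μz z (SA γ i j) < ⊤ := by
    refine ae_of_all _ fun z => ?_
    haveI := hμp z
    exact lt_of_le_of_lt prob_le_one ENNReal.one_lt_top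
  have hglt : ∀ᵐ z ∂η, νz z T < ⊤ := by
    refine ae_of_all _ fun z => ?_
    haveI := hνp z
    exact lt_of_le_of_lt prob_le_one ENNReal.one_lt_top
  have h1 : (∫⁻ z, μz z (SA γ i j) ∂η).toReal = ∫ z, f z ∂η :=
    (integral_toReal (hμm _ (hSAmeas γ i j)).aemeasurable hflt).symm
  have h2 : (∫⁻ z, νz z T ∂η).toReal = ∫ z, g z ∂η :=
    (integral_toReal (hνm _ hTmeas).aemeasurable hglt).symm
  rw [h1, h2]
  have habs : |∫ z, f z ∂η - ∫ z, g z ∂η| ≤ ε/2 := by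
    rw [← integral_sub hfint hgint]
    calc |∫ z, (f z - g z) ∂η| ≤ ∫ z, |f z - g z| ∂η := by
          simpa [Real.norm_eq_abs] using norm_integral_le_integral_norm (fun z => f z - g z)
      _ ≤ ∫ _z, (ε/2 : ℝ) ∂η := by
          refine integral_mono_ae ((hfint.sub hgint).abs) (integrable_const _) ?_
          exact key
      _ = ε/2 := by simp
  linarith [habs]

end Core


section Transfer

variable {Γ : Type} [Group Γ]

lemma dirac_prod_apply {Z Y : Type} [MeasurableSpace Z] [MeasurableSpace Y]
    (μ : Measure Y) [SFinite μ] (z : Z) {s : Set (Z × Y)} (hs : MeasurableSet s) :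
    ((Measure.dirac z).prod μ) s = μ (Prod.mk z ⁻¹' s) := by
  rw [Measure.prod_apply hs, lintegral_dirac' _ (measurable_measure_prodMk_left hs)]

lemma wcgen_fiber_prod {Z : Type} [MeasurableSpace Z] [StandardBorelSpace Z]
    (η : Measure Z) [IsProbabilityMeasure η] (b : MPAction Γ) {Y : Type} [MeasurableSpace Y]
    (dact : Γ → Y → Y) (ν' : Measure Y) (z : Z)
    (h : WCgen b.act b.μ dact ν') :
    WCgen ((trivialAction Γ Z η).prod b).act ((Measure.dirac z).prod b.μ) dact ν' := by
  intro k A hA F ε hε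
  have hA'p : IsPartition (fun i => Prod.mk z ⁻¹' A i) := by
    refine ⟨fun i => measurable_prodMk_left (hA.1 i),
      fun i j hij => (hA.2.1 i j hij).preimage _, ?_⟩
    erw [← Set.preimage_iUnion, hA.2.2, Set.preimage_univ]
  obtain ⟨B, hBp, hBbd⟩ := h k (fun i => Prod.mk z ⁻¹' A i) hA'p F ε hε
  refine ⟨B, hBp, fun γ hγ i j => ?_⟩
  have hkey : ((Measure.dirac z).prod b.μ) (((trivialAction Γ Z η).prod b).act γ '' A i ∩ A j) =
      b.μ (b.act γ '' (Prod.mk z ⁻¹' A i) ∩ (Prod.mk z ⁻¹' A j)) := by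
    have hPim : MeasurableSet (((trivialAction Γ Z η).prod b).act γ '' A i ∩ A j) :=
      (((trivialAction Γ Z η).prod b).measurableSet_image_act γ (hA.1 i)).inter (hA.1 j)
    erw [dirac_prod_apply b.μ z hPim, Set.preimage_inter]
    congr 1
    rw [MPAction.image_act_eq, MPAction.image_act_eq]
    rfl
  have hb := hBbd γ hγ i j
  rw [← hkey] at hb
  exact hb

lemma wcgen_prod_target {Z : Type} [MeasurableSpace Z] [StandardBorelSpace Z]
    (η : Measure Z) [IsProbabilityMeasure η] (d : MPAction Γ) {Xb : Type} [MeasurableSpace Xb]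
    (bact : Γ → Xb → Xb) (μ' : Measure Xb) (z : Z)
    (h : WCgen bact μ' d.act d.μ) :
    WCgen bact μ' ((trivialAction Γ Z η).prod d).act ((Measure.dirac z).prod d.μ) := by
  intro k A hA F ε hε
  obtain ⟨B, hBp, hBbd⟩ := h k A hA F ε hε
  refine ⟨fun i => Set.univ ×ˢ B i, ⟨fun i => MeasurableSet.univ.prod (hBp.1 i),
    fun i j hij => ?_, ?_⟩, fun γ hγ i j => ?_⟩
  · erw [Set.disjoint_left]
    rintro ⟨w, y⟩ hyi hyj
    exact (hBp.2.1 i j hij).ne_of_mem hyi.2 hyj.2 rfl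
  · ext p
    simp only [Set.mem_univ, iff_true]
    have hp : p.2 ∈ ⋃ i, B i := hBp.2.2 ▸ Set.mem_univ p.2
    obtain ⟨i, hi⟩ := Set.mem_iUnion.1 hp
    exact Set.mem_iUnion.2 ⟨i, Set.mem_prod.2 ⟨Set.mem_univ _, hi⟩⟩
  · have him : ((trivialAction Γ Z η).prod d).act γ '' (Set.univ ×ˢ B i) =
        Set.univ ×ˢ (d.act γ '' B i) := by
      erw [MPAction.image_act_eq, MPAction.image_act_eq]
      rfl
    have hmeq : ((Measure.dirac z).prod d.μ)
        (((trivialAction Γ Z η).prod d).act γ '' (Set.univ ×ˢ B i) ∩ Set.univ ×ˢ B j)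
        = d.μ (d.act γ '' B i ∩ B j) := by
      erw [him, Set.prod_inter_prod, Set.univ_inter, Measure.prod_prod, measure_univ, one_mul]
    have hb := hBbd γ hγ i j
    rw [← hmeq] at hb
    exact hb

end Transfer

/-- **Theorem (Tucker-Drob, Theorem 2.3).** Let `φ : b → ι_η` and `ψ : d → ι_η` be factor
maps onto the identity action on `(Z, η)`, with disintegrations `μ = ∫ μ_z dη` and
`ν = ∫ ν_z dη`, and set `b_z = Γ ↷ (X, μ_z)`, `d_z = Γ ↷ (Y, ν_z)`.  Then:
(1) if `b_z ≺ d_z` for all `z` then `b ≺ d`;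
(2) if `b ≺ d_z` for all `z` then `ι_η × b ≺ d`, and if `b_z ≺ d` for all `z` then
`b ≺ ι_η × d`;
(3) if `b_z ∼ d_z` for all `z` then `b ∼ d`, and if `b ∼ d_z` for all `z` then
`ι_η × b ∼ d`. -/
theorem stmt13 (Γ : Type) [Group Γ] [Countable Γ]
    (Z : Type) [MeasurableSpace Z] [StandardBorelSpace Z] (η : Measure Z)
    [IsProbabilityMeasure η]
    (b : MPAction Γ) (φ : b.X → Z) (hφ : IsFactorVia b (trivialAction Γ Z η) φ)
    (d : MPAction Γ) (ψ : d.X → Z) (hψ : IsFactorVia d (trivialAction Γ Z η) ψ)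
    (μz : Z → Measure b.X) (hμz : IsDisintegration b η φ μz)
    (νz : Z → Measure d.X) (hνz : IsDisintegration d η ψ νz) :
    ((∀ z : Z, WCgen b.act (μz z) d.act (νz z)) → b.WC d) ∧
    (((∀ z : Z, WCgen b.act b.μ d.act (νz z)) → ((trivialAction Γ Z η).prod b).WC d) ∧
      ((∀ z : Z, WCgen b.act (μz z) d.act d.μ) → b.WC ((trivialAction Γ Z η).prod d))) ∧
    (((∀ z : Z, WCgen b.act (μz z) d.act (νz z) ∧ WCgen d.act (νz z) b.act (μz z)) →
        b.WE d) ∧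
      ((∀ z : Z, WCgen b.act b.μ d.act (νz z) ∧ WCgen d.act (νz z) b.act b.μ) →
        ((trivialAction Γ Z η).prod b).WE d)) := by
  obtain ⟨hφm, hφmap, hφe⟩ := hφ
  obtain ⟨hψm, hψmap, hψe⟩ := hψ
  obtain ⟨hμp, hμm, hμf, hμi⟩ := hμz
  obtain ⟨hνp, hνm, hνf, hνi⟩ := hνz
  have hφe' : ∀ γ : Γ, ∀ᵐ x ∂b.μ, φ (b.act γ x) = φ x := by
    intro γ
    filter_upwards [hφe γ] with x hx
    exact hx
  have hψe' : ∀ γ : Γ, ∀ᵐ y ∂d.μ, ψ (d.act γ y) = ψ y := by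
    intro γ
    filter_upwards [hψe γ] with y hy
    exact hy
  have part1 : (∀ z : Z, WCgen b.act (μz z) d.act (νz z)) → b.WC d := fun h =>
    core_wc η b d ψ hψm hψe' μz hμp hμm hμi νz hνp hνm hνf hνi h
  have part1' : (∀ z : Z, WCgen d.act (νz z) b.act (μz z)) → d.WC b := fun h =>
    core_wc η d b φ hφm hφe' νz hνp hνm hνi μz hμp hμm hμf hμi h
  have part2a : (∀ z : Z, WCgen b.act b.μ d.act (νz z)) →
      ((trivialAction Γ Z η).prod b).WC d := by
    intro h
    have hprobb : ∀ z : Z, IsProbabilityMeasure ((Measure.dirac z).prod b.μ) := fun z =>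
      inferInstance
    have hmeasf : ∀ B : Set (Z × b.X), MeasurableSet B →
        Measurable fun z => ((Measure.dirac z).prod b.μ) B := by
      intro B hB
      have heq : ∀ z, ((Measure.dirac z).prod b.μ) B = b.μ (Prod.mk z ⁻¹' B) := fun z =>
        dirac_prod_apply b.μ z hB
      simp only [heq]
      exact measurable_measure_prodMk_left hB
    have hinteg : ∀ B : Set (Z × b.X), MeasurableSet B →
        (η.prod b.μ) B = ∫⁻ z, ((Measure.dirac z).prod b.μ) B ∂η := by
      intro B hB
      rw [Measure.prod_apply hB]
      exact lintegral_congr fun z => (dirac_prod_apply b.μ z hB).symm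
    exact core_wc η ((trivialAction Γ Z η).prod b) d ψ hψm hψe'
      (fun z => (Measure.dirac z).prod b.μ) hprobb hmeasf hinteg
      νz hνp hνm hνf hνi
      (fun z => wcgen_fiber_prod η b d.act (νz z) z (h z))
  have part2b : ∀ (b' d' : MPAction Γ) (μz' : Z → Measure b'.X),
      (∀ z, IsProbabilityMeasure (μz' z)) →
      (∀ B : Set b'.X, MeasurableSet B → Measurable fun z => μz' z B) →
      (∀ B : Set b'.X, MeasurableSet B → b'.μ B = ∫⁻ z, μz' z B ∂η) →
      (∀ z : Z, WCgen b'.act (μz' z) d'.act d'.μ) →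
      b'.WC ((trivialAction Γ Z η).prod d') := by
    intro b' d' μz' hp hm hi h
    have hprobd : ∀ z : Z, IsProbabilityMeasure ((Measure.dirac z).prod d'.μ) := fun z =>
      inferInstance
    have hmeasf : ∀ B : Set (Z × d'.X), MeasurableSet B →
        Measurable fun z => ((Measure.dirac z).prod d'.μ) B := by
      intro B hB
      have heq : ∀ z, ((Measure.dirac z).prod d'.μ) B = d'.μ (Prod.mk z ⁻¹' B) := fun z =>
        dirac_prod_apply d'.μ z hB
      simp only [heq]
      exact measurable_measure_prodMk_left hB
    have hfib : ∀ z : Z, ((Measure.dirac z).prod d'.μ) (Prod.fst ⁻¹' {z}) = 1 := by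
      intro z
      have hpre : (Prod.fst ⁻¹' {z} : Set (Z × d'.X)) = {z} ×ˢ Set.univ := by
        ext p
        simp only [Set.mem_preimage, Set.mem_singleton_iff, Set.mem_prod, Set.mem_univ,
          and_true]
      rw [hpre, Measure.prod_prod, measure_univ, mul_one]
      exact Measure.dirac_apply_of_mem (Set.mem_singleton z)
    have hinteg : ∀ B : Set (Z × d'.X), MeasurableSet B →
        (η.prod d'.μ) B = ∫⁻ z, ((Measure.dirac z).prod d'.μ) B ∂η := by
      intro B hB
      rw [Measure.prod_apply hB]
      exact lintegral_congr fun z => (dirac_prod_apply d'.μ z hB).symm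
    exact core_wc η b' ((trivialAction Γ Z η).prod d') Prod.fst measurable_fst
      (fun γ => ae_of_all _ fun p => rfl) μz' hp hm hi
      (fun z => (Measure.dirac z).prod d'.μ) hprobd hmeasf (ae_of_all _ hfib) hinteg
      (fun z => wcgen_prod_target η d' b'.act (μz' z) z (h z))
  exact ⟨part1, ⟨part2a, fun h => part2b b d μz hμp hμm hμi h⟩,
    ⟨fun h => ⟨part1 fun z => (h z).1, part1' fun z => (h z).2⟩,
      fun h => ⟨part2a fun z => (h z).1, part2b d b νz hνp hνm hνi fun z => (h z).2⟩⟩⟩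
end
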